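/- arXiv:1807.05417 — 5 statements merged into one kernel-verified Lean document; each statement's English description precedes it below -/
import Mathlib

section
/- Let (X,d,m) be a metric measure space, p ∈ (1,∞), and let D be a D-structure on (X,d,m) satisfying property L5. Then D satisfies property L4; that is, for every u ∈ S^p(X) and g1, g2 ∈ D[u], the function min{g1,g2} belongs to D[u]. -/
open Filter Set
open scoped ENNReal NNReal Topology

noncomputable section

namespace AxSob

variable {X : Type*} [MetricSpace X] [MeasurableSpace X]

/-- The quantity `∫_B |u|^p dm`. -/
def lpIntOn (m : MeasureTheory.Measure X) (p : ℝ) (u : X → ℝ) (B : Set X) : ℝ≥0∞ :=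
  ∫⁻ x in B, ENNReal.ofReal |u x| ^ p ∂m

/-- `u` belongs to `L^p(m)`. -/
def LpMem (m : MeasureTheory.Measure X) (p : ℝ) (u : X → ℝ) : Prop :=
  Measurable u ∧ lpIntOn m p u Set.univ < ∞

/-- `u` belongs to `L^p_loc(m)`: it is Borel and `p`-integrable on every bounded Borel set. -/
def LpLocMem (m : MeasureTheory.Measure X) (p : ℝ) (u : X → ℝ) : Prop :=
  Measurable u ∧ ∀ B : Set X, MeasurableSet B → Bornology.IsBounded B → lpIntOn m p u B < ∞

/-- Convergence in `L^p(m)`. -/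
def LpTendsto (m : MeasureTheory.Measure X) (p : ℝ) (g : ℕ → X → ℝ) (g₀ : X → ℝ) : Prop :=
  Tendsto (fun n => lpIntOn m p (fun x => g n x - g₀ x) Set.univ) atTop (𝓝 0)

/-- Convergence in `L^p_loc(m)`. -/
def LpLocTendsto (m : MeasureTheory.Measure X) (p : ℝ) (u : ℕ → X → ℝ) (u₀ : X → ℝ) : Prop :=
  ∀ B : Set X, MeasurableSet B → Bornology.IsBounded B →
    Tendsto (fun n => lpIntOn m p (fun x => u n x - u₀ x) B) atTop (𝓝 0)

/-- `u` belongs to `L^∞(m)`. -/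
def LinfMem (m : MeasureTheory.Measure X) (u : X → ℝ) : Prop :=
  Measurable u ∧ ∃ C : ℝ, ∀ᵐ x ∂m, |u x| ≤ C

/-- A `D`-structure (à la Gol'dshtein–Troyanov) on a metric measure space `(X, d, m)`,
with exponent `p`.  To every function `u` (thought of as an element of `L^p_loc(m)`) it
associates the family `D u` of its pseudo-gradients: non-negative Borel functions,
considered up to `m`-a.e. equality, satisfying the axioms A1–A5. -/
structure DStructure (X : Type*) [MetricSpace X] [MeasurableSpace X]
    (m : MeasureTheory.Measure X) (p : ℝ) where
  D : (X → ℝ) → Set (X → ℝ)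
  measurable_of_mem : ∀ u g, g ∈ D u → Measurable g
  nonneg_of_mem : ∀ u g, g ∈ D u → 0 ≤ g
  /-- `D` is defined on `L^p_loc(m)`, i.e. on `m`-a.e. equivalence classes. -/
  congr_ae : ∀ u v : X → ℝ, u =ᵐ[m] v → D u = D v
  /-- pseudo-gradients are considered up to `m`-a.e. equality. -/
  mem_congr_ae : ∀ u g h : X → ℝ, g ∈ D u → g =ᵐ[m] h → Measurable h → 0 ≤ h → h ∈ D u
  /-- A1 (non triviality). -/
  axiomA1 : ∀ (u : X → ℝ) (K : ℝ≥0), LpLocMem m p u → 0 ≤ u → LipschitzWith K u →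
    {x | 0 < u x}.indicator (fun _ => (K : ℝ)) ∈ D u
  /-- A2 (upper linearity). -/
  axiomA2 : ∀ (u₁ u₂ g₁ g₂ g : X → ℝ) (α₁ α₂ : ℝ),
    LpLocMem m p u₁ → LpLocMem m p u₂ → g₁ ∈ D u₁ → g₂ ∈ D u₂ →
    Measurable g → 0 ≤ g → (∀ᵐ x ∂m, |α₁| * g₁ x + |α₂| * g₂ x ≤ g x) →
    g ∈ D (fun x => α₁ * u₁ x + α₂ * u₂ x)
  /-- A3 (Leibniz rule). -/
  axiomA3 : ∀ (u g φ : X → ℝ) (K : ℝ≥0) (M : ℝ),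
    LpLocMem m p u → g ∈ D u → LipschitzWith K φ → (∀ x, |φ x| ≤ M) →
    (fun x => g x * M + (K : ℝ) * |u x|) ∈ D (fun x => φ x * u x)
  /-- A4 (lattice property). -/
  axiomA4 : ∀ u₁ u₂ g₁ g₂ : X → ℝ,
    LpLocMem m p u₁ → LpLocMem m p u₂ → g₁ ∈ D u₁ → g₂ ∈ D u₂ →
    (fun x => max (g₁ x) (g₂ x)) ∈ D (fun x => max (u₁ x) (u₂ x)) ∧
    (fun x => max (g₁ x) (g₂ x)) ∈ D (fun x => min (u₁ x) (u₂ x))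
  /-- A5 (completeness). -/
  axiomA5 : ∀ (u g : ℕ → X → ℝ) (u₀ g₀ : X → ℝ),
    (∀ n, LpLocMem m p (u n)) → (∀ n, g n ∈ D (u n)) → (∀ n, LpMem m p (g n)) →
    LpLocMem m p u₀ → Measurable g₀ → 0 ≤ g₀ →
    LpLocTendsto m p u u₀ → LpTendsto m p g g₀ → g₀ ∈ D u₀

namespace DStructure

variable {m : MeasureTheory.Measure X} {p : ℝ}

/-- The `p`-Dirichlet energy `E_p(u|B) = inf { ∫_B g^p dm : g ∈ D[u] }`. -/
def energyOn (S : DStructure X m p) (u : X → ℝ) (B : Set X) : ℝ≥0∞ :=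
  ⨅ (g : X → ℝ) (_ : g ∈ S.D u), lpIntOn m p g B

/-- The `p`-Dirichlet energy `E_p(u) = E_p(u|X)`. -/
def energy (S : DStructure X m p) (u : X → ℝ) : ℝ≥0∞ := S.energyOn u Set.univ

/-- The Sobolev class `S^p(X) = { u ∈ L^p_loc(m) : E_p(u) < ∞ }`. -/
def SobolevClass (S : DStructure X m p) : Set (X → ℝ) :=
  {u | LpLocMem m p u ∧ S.energy u < ∞}

/-- The Sobolev space `W^{1,p}(X) = L^p(m) ∩ S^p(X)`. -/
def W1p (S : DStructure X m p) : Set (X → ℝ) :=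
  {u | LpMem m p u ∧ S.energy u < ∞}

/-- The Sobolev norm `‖u‖ = (‖u‖_{L^p}^p + E_p(u))^{1/p}`. -/
def wNorm (S : DStructure X m p) (u : X → ℝ) : ℝ≥0∞ :=
  (lpIntOn m p u Set.univ + S.energy u) ^ (1 / p)

/-- `g` is the minimal pseudo-gradient of `u`: `g ∈ D[u] ∩ L^p(m)` and
`∫ g^p dm = E_p(u)`. -/
def IsMinimalPG (S : DStructure X m p) (u g : X → ℝ) : Prop :=
  g ∈ S.D u ∧ LpMem m p g ∧ lpIntOn m p g Set.univ = S.energy u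

/-- Property L1: if `u ∈ S^p(X)` is `m`-a.e. constant on a Borel set `B`, then
`E_p(u|B) = 0`. -/
def L1prop (S : DStructure X m p) : Prop :=
  ∀ u ∈ S.SobolevClass, ∀ B : Set X, MeasurableSet B →
    (∃ c : ℝ, ∀ᵐ x ∂(m.restrict B), u x = c) → S.energyOn u B = 0

/-- Property L2: if `u ∈ S^p(X)` is `m`-a.e. constant on a Borel set `B`, then the
minimal pseudo-gradient vanishes `m`-a.e. on `B`. -/
def L2prop (S : DStructure X m p) : Prop :=
  ∀ u ∈ S.SobolevClass, ∀ B : Set X, MeasurableSet B →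
    (∃ c : ℝ, ∀ᵐ x ∂(m.restrict B), u x = c) →
    ∀ g, S.IsMinimalPG u g → ∀ᵐ x ∂(m.restrict B), g x = 0

/-- Property L3: if `u ∈ S^p(X)` and `g ∈ D[u]`, then `χ_{u>0}·g ∈ D[u⁺]`. -/
def L3prop (S : DStructure X m p) : Prop :=
  ∀ u ∈ S.SobolevClass, ∀ g ∈ S.D u,
    {x | 0 < u x}.indicator g ∈ S.D (fun x => max (u x) 0)

/-- Property L4: if `u ∈ S^p(X)` and `g₁, g₂ ∈ D[u]`, then `min{g₁,g₂} ∈ D[u]`. -/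
def L4prop (S : DStructure X m p) : Prop :=
  ∀ u ∈ S.SobolevClass, ∀ g₁ ∈ S.D u, ∀ g₂ ∈ S.D u,
    (fun x => min (g₁ x) (g₂ x)) ∈ S.D u

/-- Property L5: the minimal pseudo-gradient satisfies `Du ≤ g` `m`-a.e. for every
`g ∈ D[u]`. -/
def L5prop (S : DStructure X m p) : Prop :=
  ∀ u ∈ S.SobolevClass, ∀ g, S.IsMinimalPG u g →
    ∀ h ∈ S.D u, ∀ᵐ x ∂m, g x ≤ h x

/-- A pointwise local `D`-structure: it satisfies L1 and L5. -/
def PointwiseLocal (S : DStructure X m p) : Prop := S.L1prop ∧ S.L5prop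

/-- Strong locality in the sense of Shanmugalingam. -/
def ShanmugalingamLocal (S : DStructure X m p) : Prop :=
  ∀ u₁ ∈ S.SobolevClass, ∀ u₂ ∈ S.SobolevClass, ∀ B : Set X, MeasurableSet B →
    (∀ᵐ x ∂(m.restrict B), u₁ x = u₂ x) →
    ∀ g₁ ∈ S.D u₁, ∀ g₂ ∈ S.D u₂,
      (fun x => B.indicator g₁ x + Bᶜ.indicator g₂ x) ∈ S.D u₂

/-- Strong locality in the sense of Timoshin. -/
def TimoshinLocal (S : DStructure X m p) : Prop :=
  ∀ u₁ ∈ S.SobolevClass, ∀ u₂ ∈ S.SobolevClass,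
    ∀ g₁ ∈ S.D u₁, ∀ g₂ ∈ S.D u₂,
      (fun x => {y | u₁ y < u₂ y}.indicator g₁ x + {y | u₂ y < u₁ y}.indicator g₂ x +
        {y | u₁ y = u₂ y}.indicator (fun y => min (g₁ y) (g₂ y)) x)
        ∈ S.D (fun x => min (u₁ x) (u₂ x))

end DStructure

end AxSob

open AxSob AxSob.DStructure


section AuxLemmas

open MeasureTheory AxSob AxSob.DStructure

/-! ### A pointwise uniform convexity inequality for `t ↦ t^p` on nonnegative reals -/

lemma oneDim_ineq {p : ℝ} (hp : 1 < p) :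
    ∃ c : ℝ, 0 < c ∧ ∀ t ∈ Set.Icc (0:ℝ) 1,
      1 + c * t ^ 2 ≤ ((1 + t) ^ p + (1 - t) ^ p) / 2 := by
  set K : ℝ := min 1 ((2:ℝ) ^ (p - 2)) with hKdef
  have hKpos : 0 < K := lt_min one_pos (Real.rpow_pos_of_pos two_pos _)
  have hppos : (0:ℝ) < p := by linarith
  refine ⟨p * (p - 1) * K / 4, div_pos (mul_pos (mul_pos hppos (by linarith)) hKpos) four_pos, ?_⟩
  set c : ℝ := p * (p - 1) * K / 4 with hcdef
  set φ : ℝ → ℝ :=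
    fun t => (p * (1 + t) ^ (p - 1) - p * (1 - t) ^ (p - 1)) / 2 - 2 * c * t with hφdef
  set f : ℝ → ℝ := fun t => ((1 + t) ^ p + (1 - t) ^ p) / 2 - 1 - c * t ^ 2 with hfdef
  -- derivative of f
  have hdf : ∀ t ∈ Ioo (0:ℝ) 1, HasDerivAt f (φ t) t := by
    intro t ht
    have h1t : (0:ℝ) < 1 + t := by linarith [ht.1]
    have h1t' : (0:ℝ) < 1 - t := by linarith [ht.2]
    have d1 : HasDerivAt (fun s : ℝ => (1 + s) ^ p) (p * (1 + t) ^ (p - 1) * 1) t := by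
      exact (Real.hasDerivAt_rpow_const (Or.inl h1t.ne')).comp t
        (((hasDerivAt_id t).const_add 1))
    have d2 : HasDerivAt (fun s : ℝ => (1 - s) ^ p) (p * (1 - t) ^ (p - 1) * (-1)) t := by
      exact (Real.hasDerivAt_rpow_const (Or.inl h1t'.ne')).comp t
        (((hasDerivAt_id t).neg.const_add 1))
    have d3 : HasDerivAt (fun s : ℝ => c * s ^ 2) (c * (2 * t)) t := by
      simpa using (hasDerivAt_pow 2 t).const_mul c
    have := (((d1.add d2).div_const 2).sub_const 1).sub d3
    refine this.congr_deriv ?_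
    simp only [hφdef]
    ring
  -- derivative of φ
  have hdφ : ∀ t ∈ Ioo (0:ℝ) 1, HasDerivAt φ
      ((p * ((p-1) * (1 + t) ^ (p - 2)) + p * ((p-1) * (1 - t) ^ (p - 2))) / 2 - 2 * c) t := by
    intro t ht
    have h1t : (0:ℝ) < 1 + t := by linarith [ht.1]
    have h1t' : (0:ℝ) < 1 - t := by linarith [ht.2]
    have d1 : HasDerivAt (fun s : ℝ => (1 + s) ^ (p - 1)) ((p-1) * (1 + t) ^ (p - 1 - 1) * 1) t :=
      (Real.hasDerivAt_rpow_const (Or.inl h1t.ne')).comp t (((hasDerivAt_id t).const_add 1))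
    have d2 : HasDerivAt (fun s : ℝ => (1 - s) ^ (p - 1)) ((p-1) * (1 - t) ^ (p - 1 - 1) * (-1)) t :=
      (Real.hasDerivAt_rpow_const (Or.inl h1t'.ne')).comp t (((hasDerivAt_id t).neg.const_add 1))
    have d3 : HasDerivAt (fun s : ℝ => 2 * c * s) (2 * c) t := by
      simpa using (hasDerivAt_id t).const_mul (2 * c)
    have := (((d1.const_mul p).sub (d2.const_mul p)).div_const 2).sub d3
    refine this.congr_deriv ?_
    have e1 : p - 1 - 1 = p - 2 := by ring
    rw [e1]
    ring
  -- continuity helpers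
  have c1 : ∀ q : ℝ, 0 ≤ q → ContinuousOn (fun s : ℝ => (1 + s) ^ q) (Icc 0 1) := by
    intro q hq
    exact (continuous_const.add continuous_id).continuousOn.rpow_const (fun x _ => Or.inr hq)
  have c2 : ∀ q : ℝ, 0 ≤ q → ContinuousOn (fun s : ℝ => (1 - s) ^ q) (Icc 0 1) := by
    intro q hq
    exact (continuous_const.sub continuous_id).continuousOn.rpow_const (fun x _ => Or.inr hq)
  have hφcont : ContinuousOn φ (Icc 0 1) := by
    apply ContinuousOn.sub
    · exact (((c1 (p-1) (by linarith)).const_smul p).sub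
        ((c2 (p-1) (by linarith)).const_smul p)).div_const 2
    · exact (continuous_const.mul continuous_id).continuousOn
  have hfcont : ContinuousOn f (Icc 0 1) := by
    apply ContinuousOn.sub
    · exact (((c1 p (by linarith)).add (c2 p (by linarith))).div_const 2).sub
        continuousOn_const
    · exact (continuous_const.mul (continuous_pow 2)).continuousOn
  -- φ is monotone on Icc 0 1
  have hφmono : MonotoneOn φ (Icc 0 1) := by
    apply monotoneOn_of_deriv_nonneg (convex_Icc 0 1) hφcont
    · intro t ht
      rw [interior_Icc] at ht
      exact (hdφ t ht).differentiableAt.differentiableWithinAt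
    · intro t ht
      rw [interior_Icc] at ht
      rw [(hdφ t ht).deriv]
      have h1t : (0:ℝ) < 1 + t := by linarith [ht.1]
      have hKle : K ≤ (1 + t) ^ (p - 2) := by
        rcases le_total 2 p with h2p | h2p
        · refine le_trans (min_le_left _ _) ?_
          calc (1:ℝ) = 1 ^ (p - 2) := (Real.one_rpow _).symm
          _ ≤ (1 + t) ^ (p - 2) :=
            Real.rpow_le_rpow zero_le_one (by linarith [ht.1]) (by linarith)
        · refine le_trans (min_le_right _ _) ?_
          exact Real.rpow_le_rpow_of_nonpos h1t (by linarith [ht.2]) (by linarith)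
      have hpp : (0:ℝ) < p * (p - 1) := by nlinarith
      have h2 := mul_le_mul_of_nonneg_left hKle hpp.le
      have hpos2 : 0 ≤ (1 - t) ^ (p - 2) := Real.rpow_nonneg (by linarith [ht.2]) _
      have := mul_nonneg hpp.le hpos2
      simp only [hcdef]
      nlinarith
  have hφ0 : φ 0 = 0 := by
    simp [hφdef]
  have hφnonneg : ∀ t ∈ Ioo (0:ℝ) 1, 0 ≤ φ t := by
    intro t ht
    have := hφmono (left_mem_Icc.mpr zero_le_one) ⟨ht.1.le, ht.2.le⟩ ht.1.le
    rwa [hφ0] at this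
  have hfmono : MonotoneOn f (Icc 0 1) := by
    apply monotoneOn_of_deriv_nonneg (convex_Icc 0 1) hfcont
    · intro t ht
      rw [interior_Icc] at ht
      exact (hdf t ht).differentiableAt.differentiableWithinAt
    · intro t ht
      rw [interior_Icc] at ht
      rw [(hdf t ht).deriv]
      exact hφnonneg t ht
  have hf0 : f 0 = 0 := by
    simp [hfdef]
  intro t ht
  have := hfmono (left_mem_Icc.mpr zero_le_one) ht ht.1
  rw [hf0] at this
  simp only [hfdef] at this
  linarith

lemma twoVar_ineq {p : ℝ} (hp : 1 < p) :
    ∃ c : ℝ, 0 < c ∧ ∀ a b : ℝ, 0 ≤ a → 0 ≤ b →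
      c * |a - b| ^ 2 * (a + b) ^ (p - 2) + ((a + b) / 2) ^ p ≤ (a ^ p + b ^ p) / 2 := by
  obtain ⟨c, hc, hA⟩ := oneDim_ineq hp
  have h2p : (0:ℝ) < (2:ℝ) ^ p := Real.rpow_pos_of_pos two_pos p
  refine ⟨c / (2:ℝ) ^ p, div_pos hc h2p, ?_⟩
  have aux : ∀ a b : ℝ, 0 ≤ b → b ≤ a →
      c / (2:ℝ) ^ p * |a - b| ^ 2 * (a + b) ^ (p - 2) + ((a + b) / 2) ^ p
        ≤ (a ^ p + b ^ p) / 2 := by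
    intro a b hb hba
    have ha : 0 ≤ a := hb.trans hba
    rcases eq_or_lt_of_le (by linarith : (0:ℝ) ≤ a + b) with hs | hs
    · have ha0 : a = 0 := by linarith
      have hb0 : b = 0 := by linarith
      subst ha0; subst hb0
      simp [Real.zero_rpow (by linarith : p ≠ 0)]
    · set s : ℝ := a + b with hsdef
      set t : ℝ := (a - b) / s with htdef
      have hspow : (0:ℝ) < s ^ p := Real.rpow_pos_of_pos hs p
      have hs2 : (0:ℝ) < s ^ 2 := by positivity
      have ht0 : 0 ≤ t := div_nonneg (by linarith) hs.le
      have ht1 : t ≤ 1 := by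
        rw [div_le_one hs]; linarith
      have h1t : 1 + t = 2 * a / s := by
        rw [htdef]; field_simp; linarith [hsdef]
      have h1t' : 1 - t = 2 * b / s := by
        rw [htdef]; field_simp; linarith [hsdef]
      have e1 : (1 + t) ^ p = 2 ^ p * a ^ p / s ^ p := by
        rw [h1t, Real.div_rpow (by linarith) hs.le, Real.mul_rpow (by norm_num) ha]
      have e2 : (1 - t) ^ p = 2 ^ p * b ^ p / s ^ p := by
        rw [h1t', Real.div_rpow (by linarith) hs.le, Real.mul_rpow (by norm_num) hb]
      have e3 : t ^ 2 = (a - b) ^ 2 / s ^ 2 := by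
        rw [htdef, div_pow]
      have key := mul_le_mul_of_nonneg_right (hA t ⟨ht0, ht1⟩)
        (le_of_lt (div_pos hspow h2p))
      rw [e1, e2, e3] at key
      have habs : |a - b| = a - b := abs_of_nonneg (by linarith)
      have esub : s ^ (p - 2) = s ^ p / s ^ 2 := by
        rw [Real.rpow_sub hs]
        norm_num [Real.rpow_two]
      have eL : c / 2 ^ p * |a - b| ^ 2 * s ^ (p - 2) + (s / 2) ^ p
          = (1 + c * ((a - b) ^ 2 / s ^ 2)) * (s ^ p / 2 ^ p) := by
        rw [habs, esub, Real.div_rpow hs.le (by norm_num)]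
        field_simp
        ring
      have eR : (2 ^ p * a ^ p / s ^ p + 2 ^ p * b ^ p / s ^ p) / 2 * (s ^ p / 2 ^ p)
          = (a ^ p + b ^ p) / 2 := by
        field_simp
      rw [eR] at key
      rw [hsdef] at eL
      linarith [eL ▸ key]
  intro a b ha hb
  rcases le_total b a with h | h
  · exact aux a b hb h
  · have := aux b a ha h
    calc c / 2 ^ p * |a - b| ^ 2 * (a + b) ^ (p - 2) + ((a + b) / 2) ^ p
        = c / 2 ^ p * |b - a| ^ 2 * (b + a) ^ (p - 2) + ((b + a) / 2) ^ p := by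
          rw [abs_sub_comm, add_comm a b]
      _ ≤ (b ^ p + a ^ p) / 2 := this
      _ = (a ^ p + b ^ p) / 2 := by ring

lemma point_ineq {p : ℝ} (hp : 1 < p) :
    ∃ C : ℝ≥0∞, 0 < C ∧ C ≠ ∞ ∧ ∀ a b : ℝ, 0 ≤ a → 0 ≤ b →
      C * (ENNReal.ofReal |a - b|) ^ (2:ℝ) * (ENNReal.ofReal (a + b)) ^ (p - 2)
          + (ENNReal.ofReal ((a + b) / 2)) ^ p
        ≤ ((ENNReal.ofReal a) ^ p + (ENNReal.ofReal b) ^ p) / 2 := by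
  obtain ⟨c, hc, hI⟩ := twoVar_ineq hp
  refine ⟨ENNReal.ofReal c, ENNReal.ofReal_pos.mpr hc, ENNReal.ofReal_ne_top, ?_⟩
  intro a b ha hb
  rcases eq_or_lt_of_le (by linarith : (0:ℝ) ≤ a + b) with hs | hs
  · have ha0 : a = 0 := by linarith
    have hb0 : b = 0 := by linarith
    subst ha0; subst hb0
    simp [ENNReal.zero_rpow_of_pos (by norm_num : (0:ℝ) < 2),
      ENNReal.zero_rpow_of_pos (by linarith : (0:ℝ) < p)]
  · have habs : (0:ℝ) ≤ |a - b| := abs_nonneg _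
    have e1 : (ENNReal.ofReal |a - b|) ^ (2:ℝ) = ENNReal.ofReal (|a - b| ^ 2) := by
      rw [ENNReal.ofReal_rpow_of_nonneg habs (by norm_num)]
      norm_num [Real.rpow_two]
    have e2 : (ENNReal.ofReal (a + b)) ^ (p - 2) = ENNReal.ofReal ((a + b) ^ (p - 2)) :=
      ENNReal.ofReal_rpow_of_pos hs
    have e3 : (ENNReal.ofReal ((a + b) / 2)) ^ p = ENNReal.ofReal (((a + b) / 2) ^ p) :=
      ENNReal.ofReal_rpow_of_nonneg (by linarith) (by linarith)
    have e4 : (ENNReal.ofReal a) ^ p = ENNReal.ofReal (a ^ p) :=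
      ENNReal.ofReal_rpow_of_nonneg ha (by linarith)
    have e5 : (ENNReal.ofReal b) ^ p = ENNReal.ofReal (b ^ p) :=
      ENNReal.ofReal_rpow_of_nonneg hb (by linarith)
    rw [e1, e2, e3, e4, e5, ← ENNReal.ofReal_mul hc.le, ← ENNReal.ofReal_mul (by positivity),
      ← ENNReal.ofReal_add (by positivity) (by positivity), ← ENNReal.ofReal_add
        (Real.rpow_nonneg ha p) (Real.rpow_nonneg hb p)]
    have : ((2:ℝ≥0∞) : ℝ≥0∞) = ENNReal.ofReal (2:ℝ) := by norm_num
    rw [this, ← ENNReal.ofReal_div_of_pos (by norm_num)]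
    exact ENNReal.ofReal_le_ofReal (hI a b ha hb)

/-! ### Basic consequences of the axioms -/

variable {X : Type*} [MetricSpace X] [MeasurableSpace X]
  {m : MeasureTheory.Measure X} {p : ℝ}

/-- Upward closure: any measurable nonnegative function dominating a pseudo-gradient is a
pseudo-gradient. -/
lemma mem_D_of_ae_le (S : DStructure X m p) {u g h : X → ℝ} (hu : LpLocMem m p u)
    (hg : g ∈ S.D u) (hmeas : Measurable h) (hpos : 0 ≤ h)
    (hge : ∀ᵐ x ∂m, g x ≤ h x) : h ∈ S.D u := by
  have h2 := S.axiomA2 u u g g h 1 0 hu hu hg hg hmeas hpos ?_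
  · have e : (fun x => (1:ℝ) * u x + 0 * u x) = u := by funext x; ring
    rwa [e] at h2
  · filter_upwards [hge] with x hx
    simpa using hx

/-- Midpoints of pseudo-gradients are pseudo-gradients. -/
lemma midpoint_mem_D (S : DStructure X m p) {u g h : X → ℝ} (hu : LpLocMem m p u)
    (hg : g ∈ S.D u) (hh : h ∈ S.D u) : (fun x => (g x + h x) / 2) ∈ S.D u := by
  have hmeas : Measurable fun x => (g x + h x) / 2 :=
    ((S.measurable_of_mem u g hg).add (S.measurable_of_mem u h hh)).div_const 2
  have hpos : 0 ≤ fun x => (g x + h x) / 2 := fun x => by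
    have h1 := S.nonneg_of_mem u g hg x
    have h2 := S.nonneg_of_mem u h hh x
    linarith
  have h2 := S.axiomA2 u u g h (fun x => (g x + h x) / 2) (1/2) (1/2) hu hu hg hh hmeas hpos ?_
  · have e : (fun x => (1/2 : ℝ) * u x + (1/2) * u x) = u := by funext x; ring
    rwa [e] at h2
  · filter_upwards with x
    have he : |(1/2 : ℝ)| = 1/2 := by norm_num
    rw [he]
    linarith

lemma energy_le_of_mem (S : DStructure X m p) {u g : X → ℝ} (hg : g ∈ S.D u) :
    S.energy u ≤ lpIntOn m p g Set.univ := by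
  rw [DStructure.energy, DStructure.energyOn]
  exact iInf₂_le g hg

lemma lpIntOn_univ_eq {u : X → ℝ} : lpIntOn m p u Set.univ
    = ∫⁻ x, ENNReal.ofReal |u x| ^ p ∂m := by
  rw [lpIntOn, MeasureTheory.Measure.restrict_univ]

lemma lpIntOn_univ_eq_of_nonneg {u : X → ℝ} (hu : 0 ≤ u) : lpIntOn m p u Set.univ
    = ∫⁻ x, ENNReal.ofReal (u x) ^ p ∂m := by
  rw [lpIntOn_univ_eq]
  exact MeasureTheory.lintegral_congr fun x => by rw [abs_of_nonneg (hu x)]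

/-! ### Existence of the minimal pseudo-gradient -/

lemma exists_minimalPG {p : ℝ} (hp : 1 < p) (S : DStructure X m p)
    {u : X → ℝ} (hu : u ∈ S.SobolevClass) : ∃ g, S.IsMinimalPG u g := by
  obtain ⟨huloc, hE⟩ := hu
  set E : ℝ≥0∞ := S.energy u with hEdef
  have hEtop : E ≠ ∞ := hE.ne
  have hppos : (0:ℝ) < p := by linarith
  set δ : ℕ → ℝ≥0∞ := fun n => ((n:ℝ≥0∞) + 1)⁻¹ with hδdef
  have hδpos : ∀ n, δ n ≠ 0 := fun n => by
    simp [hδdef]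
  have hδle1 : ∀ n, δ n ≤ 1 := fun n => by
    simp only [hδdef]
    rw [ENNReal.inv_le_one]
    exact le_add_self
  have hδanti : ∀ {n k : ℕ}, n ≤ k → δ k ≤ δ n := by
    intro n k h
    simp only [hδdef]
    exact ENNReal.inv_le_inv.mpr (by gcongr)
  -- choose a minimizing sequence
  have hsel : ∀ n : ℕ, ∃ g, g ∈ S.D u ∧ lpIntOn m p g Set.univ < E + δ n := by
    intro n
    have hlt : E < E + δ n := ENNReal.lt_add_right hEtop (hδpos n)
    rw [hEdef, DStructure.energy, DStructure.energyOn, iInf_lt_iff] at hlt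
    obtain ⟨g, hg⟩ := hlt
    rw [iInf_lt_iff] at hg
    obtain ⟨hgD, hglt⟩ := hg
    exact ⟨g, hgD, hglt⟩
  choose gs hmem hlt using hsel
  have hmeas : ∀ n, Measurable (gs n) := fun n => S.measurable_of_mem u (gs n) (hmem n)
  have hnn : ∀ n, 0 ≤ gs n := fun n => S.nonneg_of_mem u (gs n) (hmem n)
  have hfin : ∀ n, lpIntOn m p (gs n) Set.univ < ∞ := fun n =>
    (hlt n).trans_le (le_top.trans_eq (by simp [ENNReal.add_eq_top, hEtop, ne_of_lt]))
  have hEle : ∀ n, E ≤ lpIntOn m p (gs n) Set.univ := fun n => energy_le_of_mem S (hmem n)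
  obtain ⟨C, hCpos, hCtop, hC⟩ := point_ineq hp
  -- the quadratic-defect integral
  set Q : ℕ → ℕ → ℝ≥0∞ := fun n k => ∫⁻ x,
      (ENNReal.ofReal |gs n x - gs k x|) ^ (2:ℝ)
        * (ENNReal.ofReal (gs n x + gs k x)) ^ (p - 2) ∂m with hQdef
  have hFmeas : ∀ n k, Measurable fun x =>
      (ENNReal.ofReal |gs n x - gs k x|) ^ (2:ℝ)
        * (ENNReal.ofReal (gs n x + gs k x)) ^ (p - 2) := by
    intro n k
    exact ((ENNReal.continuous_rpow_const.measurable.comp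
        ((hmeas n).sub (hmeas k)).abs.ennreal_ofReal).mul
      (ENNReal.continuous_rpow_const.measurable.comp
        ((hmeas n).add (hmeas k)).ennreal_ofReal))
  have hGmeas : ∀ n k, Measurable fun x => (ENNReal.ofReal (gs n x + gs k x)) ^ p := by
    intro n k
    exact ENNReal.continuous_rpow_const.measurable.comp
      ((hmeas n).add (hmeas k)).ennreal_ofReal
  have hgsmeasp : ∀ n, Measurable fun x => (ENNReal.ofReal (gs n x)) ^ p := fun n =>
    ENNReal.continuous_rpow_const.measurable.comp (hmeas n).ennreal_ofReal
  have hIeq : ∀ n, lpIntOn m p (gs n) Set.univ = ∫⁻ x, (ENNReal.ofReal (gs n x)) ^ p ∂m :=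
    fun n => lpIntOn_univ_eq_of_nonneg (hnn n)
  -- the fundamental estimate
  have hkey : ∀ n k, C * Q n k + E ≤ E + (δ n + δ k) / 2 := by
    intro n k
    have hmid : (fun x => (gs n x + gs k x) / 2) ∈ S.D u :=
      midpoint_mem_D S huloc (hmem n) (hmem k)
    have hmidnn : (0:X → ℝ) ≤ fun x => (gs n x + gs k x) / 2 := fun x => by
      have h1 : (0:ℝ) ≤ gs n x := hnn n x
      have h2 : (0:ℝ) ≤ gs k x := hnn k x
      dsimp; linarith
    have hEmid : E ≤ ∫⁻ x, (ENNReal.ofReal ((gs n x + gs k x) / 2)) ^ p ∂m := by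
      have := energy_le_of_mem S hmid
      rwa [lpIntOn_univ_eq_of_nonneg hmidnn] at this
    have hsplitL : ∫⁻ x, (C * ((ENNReal.ofReal |gs n x - gs k x|) ^ (2:ℝ)
          * (ENNReal.ofReal (gs n x + gs k x)) ^ (p - 2))
        + (ENNReal.ofReal ((gs n x + gs k x) / 2)) ^ p) ∂m
        = C * Q n k + ∫⁻ x, (ENNReal.ofReal ((gs n x + gs k x) / 2)) ^ p ∂m := by
      rw [MeasureTheory.lintegral_add_left (((hFmeas n k).const_mul C)),
        MeasureTheory.lintegral_const_mul C (hFmeas n k)]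
    have hsplitR : ∫⁻ x, ((ENNReal.ofReal (gs n x)) ^ p + (ENNReal.ofReal (gs k x)) ^ p) / 2 ∂m
        = (lpIntOn m p (gs n) Set.univ + lpIntOn m p (gs k) Set.univ) / 2 := by
      simp only [div_eq_mul_inv]
      rw [MeasureTheory.lintegral_mul_const _ (by exact (hgsmeasp n).add (hgsmeasp k) :
          Measurable fun x => ENNReal.ofReal (gs n x) ^ p + ENNReal.ofReal (gs k x) ^ p),
        MeasureTheory.lintegral_add_left (hgsmeasp n), hIeq n, hIeq k]
    have hmono : (∫⁻ x, (C * ((ENNReal.ofReal |gs n x - gs k x|) ^ (2:ℝ)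
          * (ENNReal.ofReal (gs n x + gs k x)) ^ (p - 2))
        + (ENNReal.ofReal ((gs n x + gs k x) / 2)) ^ p) ∂m)
        ≤ ∫⁻ x, ((ENNReal.ofReal (gs n x)) ^ p + (ENNReal.ofReal (gs k x)) ^ p) / 2 ∂m := by
      apply MeasureTheory.lintegral_mono
      intro x
      have := hC (gs n x) (gs k x) (hnn n x) (hnn k x)
      calc C * ((ENNReal.ofReal |gs n x - gs k x|) ^ (2:ℝ)
            * (ENNReal.ofReal (gs n x + gs k x)) ^ (p - 2))
            + (ENNReal.ofReal ((gs n x + gs k x) / 2)) ^ p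
          = C * (ENNReal.ofReal |gs n x - gs k x|) ^ (2:ℝ)
            * (ENNReal.ofReal (gs n x + gs k x)) ^ (p - 2)
            + (ENNReal.ofReal ((gs n x + gs k x) / 2)) ^ p := by ring_nf
        _ ≤ _ := this
    calc C * Q n k + E
        ≤ C * Q n k + ∫⁻ x, (ENNReal.ofReal ((gs n x + gs k x) / 2)) ^ p ∂m :=
          add_le_add_right hEmid _
      _ = _ := (hsplitL).symm
      _ ≤ ∫⁻ x, ((ENNReal.ofReal (gs n x)) ^ p + (ENNReal.ofReal (gs k x)) ^ p) / 2 ∂m := hmono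
      _ = (lpIntOn m p (gs n) Set.univ + lpIntOn m p (gs k) Set.univ) / 2 := hsplitR
      _ ≤ ((E + δ n) + (E + δ k)) / 2 :=
          ENNReal.div_le_div_right (add_le_add (hlt n).le (hlt k).le) 2
      _ = E + (δ n + δ k) / 2 := by
          rw [show (E + δ n) + (E + δ k) = (E + E) + (δ n + δ k) by ring,
            ENNReal.add_div, ENNReal.add_div, ENNReal.add_halves]
  have hQbound : ∀ n k, C * Q n k ≤ (δ n + δ k) / 2 := by
    intro n k
    have := hkey n k
    rwa [add_comm E ((δ n + δ k) / 2), ENNReal.add_le_add_iff_right hEtop] at this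
  -- Q becomes arbitrarily small
  have hQsmall : ∀ ρ : ℝ≥0∞, ρ ≠ 0 → ∃ N, ∀ n k, N ≤ n → N ≤ k → Q n k ≤ ρ := by
    intro ρ hρ
    have hCρ : C * ρ ≠ 0 := by
      simp [hCpos.ne', hρ]
    obtain ⟨j, hj⟩ := ENNReal.exists_inv_nat_lt hCρ
    refine ⟨j, fun n k hn hk => ?_⟩
    have hδj : ∀ i, j ≤ i → δ i ≤ C * ρ := by
      intro i hi
      refine le_trans (hδanti hi) (le_trans ?_ hj.le)
      simp only [hδdef]
      exact ENNReal.inv_le_inv.mpr le_self_add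
    have h1 : (δ n + δ k) / 2 ≤ C * ρ := by
      rw [ENNReal.div_le_iff_le_mul (Or.inl two_ne_zero) (Or.inl ENNReal.ofNat_ne_top)]
      calc δ n + δ k ≤ C * ρ + C * ρ := add_le_add (hδj n hn) (hδj k hk)
        _ = C * ρ * 2 := by ring
    exact (ENNReal.mul_le_mul_iff_right hCpos.ne' hCtop).mp ((hQbound n k).trans h1)
  -- the minimizing sequence is Cauchy in `L^p`
  have hIdiff : ∀ η : ℝ≥0∞, η ≠ 0 → ∃ N, ∀ n k, N ≤ n → N ≤ k →
      lpIntOn m p (fun x => gs n x - gs k x) Set.univ ≤ η := by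
    have hIdiffeq : ∀ n k, lpIntOn m p (fun x => gs n x - gs k x) Set.univ
        = ∫⁻ x, (ENNReal.ofReal |gs n x - gs k x|) ^ p ∂m := fun n k => lpIntOn_univ_eq
    rcases le_or_gt 2 p with h2p | h2p
    · -- the case `2 ≤ p`
      have hptw : ∀ n k, lpIntOn m p (fun x => gs n x - gs k x) Set.univ ≤ Q n k := by
        intro n k
        rw [hIdiffeq n k]
        apply MeasureTheory.lintegral_mono
        intro x
        have ha : (0:ℝ) ≤ gs n x := hnn n x
        have hb : (0:ℝ) ≤ gs k x := hnn k x
        have hxy : ENNReal.ofReal |gs n x - gs k x| ≤ ENNReal.ofReal (gs n x + gs k x) :=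
          ENNReal.ofReal_le_ofReal (abs_le.mpr ⟨by linarith, by linarith⟩)
        calc (ENNReal.ofReal |gs n x - gs k x|) ^ p
            = (ENNReal.ofReal |gs n x - gs k x|) ^ ((2:ℝ) + (p - 2)) := by norm_num
          _ = (ENNReal.ofReal |gs n x - gs k x|) ^ (2:ℝ)
              * (ENNReal.ofReal |gs n x - gs k x|) ^ (p - 2) :=
              ENNReal.rpow_add_of_nonneg 2 (p - 2) (by norm_num) (by linarith)
          _ ≤ (ENNReal.ofReal |gs n x - gs k x|) ^ (2:ℝ)
              * (ENNReal.ofReal (gs n x + gs k x)) ^ (p - 2) :=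
              mul_le_mul_right (ENNReal.rpow_le_rpow hxy (by linarith)) _
      intro η hη
      obtain ⟨N, hN⟩ := hQsmall η hη
      exact ⟨N, fun n k hn hk => (hptw n k).trans (hN n k hn hk)⟩
    · -- the case `p < 2` : use Hölder's inequality
      set T : ℕ → ℕ → ℝ≥0∞ := fun n k =>
        ∫⁻ x, (ENNReal.ofReal (gs n x + gs k x)) ^ p ∂m with hTdef
      set C₁ : ℝ≥0∞ := 2 ^ p * (2 * E + 2) with hC₁def
      have hC₁top : C₁ ≠ ∞ := by
        apply ENNReal.mul_ne_top (ENNReal.rpow_ne_top_of_nonneg hppos.le ENNReal.ofNat_ne_top)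
        simp [ENNReal.mul_eq_top, hEtop]
      have hC₁0 : C₁ ≠ 0 := by
        apply mul_ne_zero (ENNReal.rpow_pos two_pos ENNReal.ofNat_ne_top).ne'
        simp
      have hT : ∀ n k, T n k ≤ C₁ := by
        intro n k
        have hptw : ∀ x, (ENNReal.ofReal (gs n x + gs k x)) ^ p
            ≤ 2 ^ p * ((ENNReal.ofReal (gs n x)) ^ p + (ENNReal.ofReal (gs k x)) ^ p) := by
          intro x
          set A := ENNReal.ofReal (gs n x)
          set B := ENNReal.ofReal (gs k x)
          have e : ENNReal.ofReal (gs n x + gs k x) = A + B :=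
            ENNReal.ofReal_add (hnn n x) (hnn k x)
          rw [e]
          calc (A + B) ^ p ≤ (2 * max A B) ^ p := by
                apply ENNReal.rpow_le_rpow _ hppos.le
                rw [two_mul]
                exact add_le_add (le_max_left _ _) (le_max_right _ _)
            _ = 2 ^ p * (max A B) ^ p := ENNReal.mul_rpow_of_nonneg _ _ hppos.le
            _ ≤ 2 ^ p * (A ^ p + B ^ p) := by
                apply mul_le_mul_right
                rcases le_total A B with h | h
                · rw [max_eq_right h]; exact le_add_self
                · rw [max_eq_left h]; exact self_le_add_right _ _
        calc T n k ≤ ∫⁻ x, 2 ^ p * ((ENNReal.ofReal (gs n x)) ^ p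
              + (ENNReal.ofReal (gs k x)) ^ p) ∂m := MeasureTheory.lintegral_mono hptw
          _ = 2 ^ p * (lpIntOn m p (gs n) Set.univ + lpIntOn m p (gs k) Set.univ) := by
              rw [MeasureTheory.lintegral_const_mul _ (by exact (hgsmeasp n).add (hgsmeasp k) :
                  Measurable fun x => ENNReal.ofReal (gs n x) ^ p + ENNReal.ofReal (gs k x) ^ p),
                MeasureTheory.lintegral_add_left (hgsmeasp n), hIeq n, hIeq k]
          _ ≤ 2 ^ p * (2 * E + 2) := by
              apply mul_le_mul_right
              calc lpIntOn m p (gs n) Set.univ + lpIntOn m p (gs k) Set.univ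
                  ≤ (E + δ n) + (E + δ k) := add_le_add (hlt n).le (hlt k).le
                _ ≤ (E + 1) + (E + 1) := add_le_add (add_le_add_right (hδle1 n) E)
                    (add_le_add_right (hδle1 k) E)
                _ = 2 * E + 2 := by ring
      set C₂ : ℝ≥0∞ := C₁ ^ ((2 - p) / 2) with hC₂def
      have hC₂top : C₂ ≠ ∞ := ENNReal.rpow_ne_top_of_nonneg (by linarith) hC₁top
      have hC₂0 : C₂ ≠ 0 := (ENNReal.rpow_pos (pos_iff_ne_zero.mpr hC₁0) hC₁top).ne'
      have hconj : Real.HolderConjugate (2 / p) (2 / (2 - p)) := by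
        rw [Real.holderConjugate_iff]
        constructor
        · rw [lt_div_iff₀ hppos]; linarith
        · rw [inv_div, inv_div, ← add_div, show p + (2 - p) = 2 by ring,
            div_self (two_ne_zero)]
      have hHold : ∀ n k, lpIntOn m p (fun x => gs n x - gs k x) Set.univ
          ≤ (Q n k) ^ (p / 2) * C₂ := by
        intro n k
        set F : X → ℝ≥0∞ := fun x => (ENNReal.ofReal |gs n x - gs k x|) ^ (2:ℝ)
          * (ENNReal.ofReal (gs n x + gs k x)) ^ (p - 2) with hFdef
        set G : X → ℝ≥0∞ := fun x => (ENNReal.ofReal (gs n x + gs k x)) ^ p with hGdef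
        have hfg : ∀ x, (ENNReal.ofReal |gs n x - gs k x|) ^ p
            ≤ (F x) ^ (p / 2) * (G x) ^ ((2 - p) / 2) := by
          intro x
          rcases eq_or_lt_of_le (add_nonneg (hnn n x) (hnn k x)) with hs | hs
          · have ha : (0:ℝ) ≤ gs n x := hnn n x
            have hb : (0:ℝ) ≤ gs k x := hnn k x
            have hs' : (0:ℝ) = gs n x + gs k x := hs
            have h1 : gs n x = 0 := by linarith
            have h2 : gs k x = 0 := by linarith
            rw [h1, h2]
            simp [ENNReal.zero_rpow_of_pos hppos]
          · set A := ENNReal.ofReal |gs n x - gs k x| with hAdef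
            set B := ENNReal.ofReal (gs n x + gs k x) with hBdef
            have hB0 : B ≠ 0 := (ENNReal.ofReal_pos.mpr hs).ne'
            have hBtop : B ≠ ∞ := ENNReal.ofReal_ne_top
            have : (F x) ^ (p / 2) * (G x) ^ ((2 - p) / 2)
                = A ^ p * B ^ ((p - 2) * (p / 2) + p * ((2 - p) / 2)) := by
              rw [hFdef, hGdef]
              dsimp only
              rw [ENNReal.mul_rpow_of_nonneg _ _ (by linarith : (0:ℝ) ≤ p / 2),
                ← ENNReal.rpow_mul, ← ENNReal.rpow_mul, ← ENNReal.rpow_mul,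
                ENNReal.rpow_add _ _ hB0 hBtop,
                show (2:ℝ) * (p / 2) = p by ring, mul_assoc]
            rw [this, show (p - 2) * (p / 2) + p * ((2 - p) / 2) = 0 by ring,
              ENNReal.rpow_zero, mul_one]
        have hFaem : AEMeasurable (fun x => (F x) ^ (p / 2)) m :=
          (ENNReal.continuous_rpow_const.measurable.comp (hFmeas n k)).aemeasurable
        have hGaem : AEMeasurable (fun x => (G x) ^ ((2 - p) / 2)) m :=
          (ENNReal.continuous_rpow_const.measurable.comp (hGmeas n k)).aemeasurable
        have hHolder := ENNReal.lintegral_mul_le_Lp_mul_Lq m hconj hFaem hGaem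
        have e1 : ∀ y : ℝ≥0∞, (y ^ (p / 2)) ^ (2 / p) = y := by
          intro y
          rw [← ENNReal.rpow_mul, show (p / 2) * (2 / p) = 1 by field_simp, ENNReal.rpow_one]
        have e2 : ∀ y : ℝ≥0∞, (y ^ ((2 - p) / 2)) ^ (2 / (2 - p)) = y := by
          intro y
          rw [← ENNReal.rpow_mul, show ((2 - p) / 2) * (2 / (2 - p)) = 1 by
            have h2p' : (2:ℝ) - p ≠ 0 := by linarith
            field_simp, ENNReal.rpow_one]
        calc lpIntOn m p (fun x => gs n x - gs k x) Set.univ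
            = ∫⁻ x, (ENNReal.ofReal |gs n x - gs k x|) ^ p ∂m := hIdiffeq n k
          _ ≤ ∫⁻ x, (F x) ^ (p / 2) * (G x) ^ ((2 - p) / 2) ∂m :=
              MeasureTheory.lintegral_mono hfg
          _ ≤ (∫⁻ x, ((F x) ^ (p / 2)) ^ (2 / p) ∂m) ^ (1 / (2 / p))
              * (∫⁻ x, ((G x) ^ ((2 - p) / 2)) ^ (2 / (2 - p)) ∂m) ^ (1 / (2 / (2 - p))) :=
              hHolder
          _ = (Q n k) ^ (p / 2) * (T n k) ^ ((2 - p) / 2) := by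
              simp only [e1, e2, one_div_div]; rfl
          _ ≤ (Q n k) ^ (p / 2) * C₂ := by
              exact mul_le_mul_right (ENNReal.rpow_le_rpow (hT n k) (by linarith)) _
      intro η hη
      set σ : ℝ≥0∞ := min 1 (η / C₂) with hσdef
      have hσ0 : σ ≠ 0 := by
        have hd : η / C₂ ≠ 0 := by
          rw [ne_eq, ENNReal.div_eq_zero_iff]
          push_neg
          exact ⟨hη, hC₂top⟩
        exact (lt_min one_pos (pos_iff_ne_zero.mpr hd)).ne'
      have hσtop : σ ≠ ∞ := (min_le_left _ _).trans_lt ENNReal.one_lt_top |>.ne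
      set ρ : ℝ≥0∞ := σ ^ (2 / p) with hρdef
      have hρ0 : ρ ≠ 0 := (ENNReal.rpow_pos (pos_iff_ne_zero.mpr hσ0) hσtop).ne'
      obtain ⟨N, hN⟩ := hQsmall ρ hρ0
      refine ⟨N, fun n k hn hk => ?_⟩
      calc lpIntOn m p (fun x => gs n x - gs k x) Set.univ
          ≤ (Q n k) ^ (p / 2) * C₂ := hHold n k
        _ ≤ ρ ^ (p / 2) * C₂ :=
            mul_le_mul_left (ENNReal.rpow_le_rpow (hN n k hn hk) (by linarith)) _
        _ = σ * C₂ := by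
            rw [hρdef, ← ENNReal.rpow_mul, show (2 / p) * (p / 2) = 1 by field_simp,
              ENNReal.rpow_one]
        _ ≤ (η / C₂) * C₂ := mul_le_mul_left (min_le_right _ _) _
        _ = η := ENNReal.div_mul_cancel hC₂0 hC₂top
  -- pass to the Lp space and extract a limit
  set q : ℝ≥0∞ := ENNReal.ofReal p with hqdef
  have hq0 : q ≠ 0 := (ENNReal.ofReal_pos.mpr hppos).ne'
  have hqtop : q ≠ ∞ := ENNReal.ofReal_ne_top
  have hqreal : q.toReal = p := ENNReal.toReal_ofReal hppos.le
  haveI : Fact (1 ≤ q) := ⟨by rw [hqdef]; exact ENNReal.one_le_ofReal.mpr hp.le⟩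
  have heLp : ∀ h : X → ℝ, MeasureTheory.eLpNorm h q m
      = (∫⁻ x, (ENNReal.ofReal |h x|) ^ p ∂m) ^ (1/p) := by
    intro h
    rw [MeasureTheory.eLpNorm_eq_lintegral_rpow_enorm_toReal hq0 hqtop, hqreal]
    congr 1
    exact MeasureTheory.lintegral_congr fun x => by rw [Real.enorm_eq_ofReal_abs]
  have heLpI : ∀ h : X → ℝ, lpIntOn m p h Set.univ = (MeasureTheory.eLpNorm h q m) ^ p := by
    intro h
    rw [lpIntOn_univ_eq, heLp h, ← ENNReal.rpow_mul,
      show (1/p) * p = 1 by field_simp, ENNReal.rpow_one]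
  have hmemLp : ∀ n, MeasureTheory.MemLp (gs n) q m := by
    intro n
    refine ⟨(hmeas n).aestronglyMeasurable, ?_⟩
    rw [heLp (gs n)]
    exact ENNReal.rpow_lt_top_of_nonneg (by positivity)
      (by rw [← lpIntOn_univ_eq]; exact (hfin n).ne)
  set G : ℕ → MeasureTheory.Lp ℝ q m := fun n => (hmemLp n).toLp (gs n) with hGdef
  have hGdist : ∀ n k, dist (G n) (G k)
      = ((lpIntOn m p (fun x => gs n x - gs k x) Set.univ) ^ (1/p)).toReal := by
    intro n k
    rw [dist_eq_norm, MeasureTheory.Lp.norm_def]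
    congr 1
    have h1 : ⇑(G n - G k) =ᵐ[m] fun x => gs n x - gs k x := by
      filter_upwards [MeasureTheory.Lp.coeFn_sub (G n) (G k), (hmemLp n).coeFn_toLp,
        (hmemLp k).coeFn_toLp] with x ha hb hc
      rw [ha, Pi.sub_apply]
      change (G n : X → ℝ) x - (G k : X → ℝ) x = _
      rw [hb, hc]
    rw [MeasureTheory.eLpNorm_congr_ae h1, heLp, ← lpIntOn_univ_eq]
  have hcauchy : CauchySeq G := by
    rw [Metric.cauchySeq_iff]
    intro ε hε
    have hη : ((ENNReal.ofReal (ε/2)) ^ p) ≠ 0 :=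
      (ENNReal.rpow_pos (ENNReal.ofReal_pos.mpr (by linarith)) ENNReal.ofReal_ne_top).ne'
    obtain ⟨N, hN⟩ := hIdiff _ hη
    refine ⟨N, fun n hn k hk => ?_⟩
    rw [hGdist n k]
    have h1 : (lpIntOn m p (fun x => gs n x - gs k x) Set.univ) ^ (1/p)
        ≤ ENNReal.ofReal (ε/2) := by
      calc (lpIntOn m p (fun x => gs n x - gs k x) Set.univ) ^ (1/p)
          ≤ ((ENNReal.ofReal (ε/2)) ^ p) ^ (1/p) :=
            ENNReal.rpow_le_rpow (hN n k hn hk) (by positivity)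
        _ = ENNReal.ofReal (ε/2) := by
            rw [← ENNReal.rpow_mul, show p * (1/p) = 1 by field_simp, ENNReal.rpow_one]
    calc ((lpIntOn m p (fun x => gs n x - gs k x) Set.univ) ^ (1/p)).toReal
        ≤ (ENNReal.ofReal (ε/2)).toReal := ENNReal.toReal_mono ENNReal.ofReal_ne_top h1
      _ = ε/2 := ENNReal.toReal_ofReal (by linarith)
      _ < ε := by linarith
  obtain ⟨f, hf⟩ := cauchySeq_tendsto_of_complete hcauchy
  have haef : AEMeasurable (⇑f) m := (MeasureTheory.Lp.aestronglyMeasurable f).aemeasurable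
  have hdistf : ∀ n, MeasureTheory.eLpNorm (fun x => gs n x - f x) q m
      = ENNReal.ofReal (dist (G n) f) := by
    intro n
    have h1 : ⇑(G n - f) =ᵐ[m] fun x => gs n x - f x := by
      filter_upwards [MeasureTheory.Lp.coeFn_sub (G n) f, (hmemLp n).coeFn_toLp] with x ha hb
      rw [ha, Pi.sub_apply]
      change (G n : X → ℝ) x - f x = _
      rw [hb]
    rw [← MeasureTheory.eLpNorm_congr_ae h1, dist_eq_norm, MeasureTheory.Lp.norm_def,
      ENNReal.ofReal_toReal (MeasureTheory.Lp.eLpNorm_ne_top _)]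
  have htend0 : Filter.Tendsto (fun n => MeasureTheory.eLpNorm (fun x => gs n x - f x) q m)
      Filter.atTop (𝓝 0) := by
    simp only [hdistf]
    rw [show (0:ℝ≥0∞) = ENNReal.ofReal 0 by simp]
    exact ENNReal.tendsto_ofReal (tendsto_iff_dist_tendsto_zero.mp hf)
  have htim : MeasureTheory.TendstoInMeasure m gs Filter.atTop ⇑f :=
    MeasureTheory.tendstoInMeasure_of_tendsto_eLpNorm hq0
      (fun n => (hmeas n).aestronglyMeasurable) (MeasureTheory.Lp.aestronglyMeasurable f)
      htend0
  obtain ⟨ns, hns_mono, hae⟩ := htim.exists_seq_tendsto_ae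
  have hfnn : ∀ᵐ x ∂m, 0 ≤ f x := by
    filter_upwards [hae] with x hx
    exact ge_of_tendsto hx (Filter.Eventually.of_forall fun i => hnn (ns i) x)
  set g₀ : X → ℝ := fun x => max (haef.mk (⇑f) x) 0 with hg₀def
  have hg₀meas : Measurable g₀ := haef.measurable_mk.max measurable_const
  have hg₀nn : 0 ≤ g₀ := fun x => le_max_right _ _
  have hg₀ae : g₀ =ᵐ[m] ⇑f := by
    filter_upwards [haef.ae_eq_mk, hfnn] with x h1 h2
    rw [hg₀def]
    dsimp only
    rw [← h1, max_eq_left h2]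
  have haeg₀ : ∀ᵐ x ∂m, Filter.Tendsto (fun i => gs (ns i) x) Filter.atTop (𝓝 (g₀ x)) := by
    filter_upwards [hae, hg₀ae] with x h1 h2
    rw [h2]
    exact h1
  have hLpT : Filter.Tendsto (fun n => lpIntOn m p (fun x => gs n x - g₀ x) Set.univ)
      Filter.atTop (𝓝 0) := by
    have he : ∀ n, lpIntOn m p (fun x => gs n x - g₀ x) Set.univ
        = (MeasureTheory.eLpNorm (fun x => gs n x - f x) q m) ^ p := by
      intro n
      rw [heLpI]
      congr 1
      apply MeasureTheory.eLpNorm_congr_ae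
      filter_upwards [hg₀ae] with x hx
      rw [hx]
    simp only [he]
    have := htend0.ennrpow_const p
    rwa [ENNReal.zero_rpow_of_pos hppos] at this
  have hg₀mem : g₀ ∈ S.D u := by
    apply S.axiomA5 (fun _ => u) gs u g₀ (fun _ => huloc) hmem
      (fun n => ⟨hmeas n, hfin n⟩) huloc hg₀meas hg₀nn ?_ hLpT
    intro B hB hBb
    have h0 : (fun n : ℕ => lpIntOn m p (fun x => u x - u x) B) = fun _ => 0 := by
      funext n
      rw [lpIntOn]
      simp [ENNReal.zero_rpow_of_pos hppos]
    rw [h0]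
    exact tendsto_const_nhds
  -- by Fatou's lemma, `g₀` attains the minimal energy
  have hIg₀leE : lpIntOn m p g₀ Set.univ ≤ E := by
    rw [lpIntOn_univ_eq_of_nonneg hg₀nn]
    have hcont : Continuous fun r : ℝ => (ENNReal.ofReal r) ^ p :=
      ENNReal.continuous_rpow_const.comp ENNReal.continuous_ofReal
    have hlim : ∀ᵐ x ∂m, (ENNReal.ofReal (g₀ x)) ^ p
        = Filter.liminf (fun i => (ENNReal.ofReal (gs (ns i) x)) ^ p) Filter.atTop := by
      filter_upwards [haeg₀] with x hx
      exact (((hcont.tendsto _).comp hx).liminf_eq).symm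
    calc ∫⁻ x, (ENNReal.ofReal (g₀ x)) ^ p ∂m
        = ∫⁻ x, Filter.liminf (fun i => (ENNReal.ofReal (gs (ns i) x)) ^ p) Filter.atTop ∂m :=
          MeasureTheory.lintegral_congr_ae hlim
      _ ≤ Filter.liminf (fun i => ∫⁻ x, (ENNReal.ofReal (gs (ns i) x)) ^ p ∂m)
          Filter.atTop := MeasureTheory.lintegral_liminf_le (fun i => hgsmeasp (ns i))
      _ ≤ Filter.liminf (fun i : ℕ => E + δ i) Filter.atTop := by
          refine Filter.liminf_le_liminf (Filter.Eventually.of_forall fun i => ?_)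
            (by isBoundedDefault) (by isBoundedDefault)
          rw [← hIeq (ns i)]
          exact le_trans (hlt (ns i)).le (add_le_add_right (hδanti (hns_mono.le_apply)) E)
      _ = E := by
          have hδ0 : Filter.Tendsto δ Filter.atTop (𝓝 0) := by
            have h2 := ENNReal.tendsto_inv_nat_nhds_zero.comp
              (Filter.tendsto_add_atTop_nat 1)
            have he : ((fun n : ℕ => (n:ℝ≥0∞)⁻¹) ∘ (fun n => n + 1)) = δ := by
              funext n
              simp [hδdef, Function.comp]
            rwa [he] at h2
          have htend : Filter.Tendsto (fun i : ℕ => E + δ i) Filter.atTop (𝓝 (E + 0)) :=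
            Filter.Tendsto.const_add E hδ0
          rw [add_zero] at htend
          exact htend.liminf_eq
  have hIg₀E : lpIntOn m p g₀ Set.univ = E :=
    le_antisymm hIg₀leE (energy_le_of_mem S hg₀mem)
  exact ⟨g₀, hg₀mem, ⟨hg₀meas, by rw [hIg₀E]; exact hE⟩, hIg₀E⟩

end AuxLemmas

/-- Property L5 implies property L4. -/
theorem L5_implies_L4 {X : Type*} [MetricSpace X] [CompleteSpace X]
    [TopologicalSpace.SeparableSpace X] [MeasurableSpace X] [BorelSpace X]
    (m : MeasureTheory.Measure X) (hm : m ≠ 0)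
    (hball : ∀ (x : X) (r : ℝ), m (Metric.ball x r) < ∞)
    (p : ℝ) (hp : 1 < p) (S : DStructure X m p)
    (hL5 : S.L5prop) : S.L4prop := by
  intro u hu g₁ hg₁ g₂ hg₂
  obtain ⟨g₀, hmin⟩ := exists_minimalPG hp S hu
  have h1 := hL5 u hu g₀ hmin g₁ hg₁
  have h2 := hL5 u hu g₀ hmin g₂ hg₂
  refine mem_D_of_ae_le S hu.1 hmin.1
    ((S.measurable_of_mem u g₁ hg₁).min (S.measurable_of_mem u g₂ hg₂))
    (fun x => le_min (S.nonneg_of_mem u g₁ hg₁ x) (S.nonneg_of_mem u g₂ hg₂ x)) ?_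
  filter_upwards [h1, h2] with x hx1 hx2
  exact le_min hx1 hx2
end
end

section
/- Let (X,d,m) be a metric measure space, p ∈ (1,∞), and let D be a D-structure on (X,d,m) satisfying properties L1 and L5. Then D satisfies property L2; that is, if B ⊆ X is Borel and u ∈ S^p(X) is m-a.e. constant on B, then the minimal pseudo-gradient Du vanishes m-a.e. on B. -/
open Filter Set
open scoped ENNReal NNReal Topology

noncomputable section

open AxSob AxSob.DStructure

/-- Properties L1 and L5 together imply property L2. -/
theorem L1_and_L5_imply_L2 {X : Type*} [MetricSpace X] [CompleteSpace X]
    [TopologicalSpace.SeparableSpace X] [MeasurableSpace X] [BorelSpace X]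
    (m : MeasureTheory.Measure X) (hm : m ≠ 0)
    (hball : ∀ (x : X) (r : ℝ), m (Metric.ball x r) < ∞)
    (p : ℝ) (hp : 1 < p) (S : DStructure X m p)
    (hL1 : S.L1prop) (hL5 : S.L5prop) : S.L2prop := by
  intro u hu B hB hconst g hg
  have hE : S.energyOn u B = 0 := hL1 u hu B hB hconst
  have hgD : g ∈ S.D u := hg.1
  have hgmeas : Measurable g := S.measurable_of_mem u g hgD
  have hgnn : 0 ≤ g := S.nonneg_of_mem u g hgD
  -- lpIntOn of g on B is ≤ every lpIntOn of g' ∈ D u on B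
  have hle : lpIntOn m p g B ≤ S.energyOn u B := by
    refine le_iInf fun g' => le_iInf fun hg' => ?_
    have hae : ∀ᵐ x ∂m, g x ≤ g' x := hL5 u hu g hg g' hg'
    have hae' : ∀ᵐ x ∂(m.restrict B), g x ≤ g' x :=
      MeasureTheory.ae_restrict_of_ae hae
    refine MeasureTheory.lintegral_mono_ae (hae'.mono fun x hx => ?_)
    have h1 : |g x| ≤ |g' x| := by
      have := hgnn x
      rw [abs_of_nonneg this]
      exact hx.trans (le_abs_self _)
    exact ENNReal.rpow_le_rpow (ENNReal.ofReal_le_ofReal h1) (le_of_lt (lt_trans one_pos hp))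
  have hzero : lpIntOn m p g B = 0 := le_antisymm (hE ▸ hle) zero_le
  have hmeas : Measurable fun x => ENNReal.ofReal |g x| ^ p :=
    ((ENNReal.measurable_ofReal.comp hgmeas.abs).pow_const p)
  have haez : ∀ᵐ x ∂(m.restrict B), ENNReal.ofReal |g x| ^ p = 0 :=
    (MeasureTheory.lintegral_eq_zero_iff hmeas).mp hzero
  refine haez.mono fun x hx => ?_
  have hp0 : (0:ℝ) < p := lt_trans one_pos hp
  rcases (ENNReal.rpow_eq_zero_iff).mp hx with ⟨h0, _⟩ | ⟨h0, hneg⟩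
  · have : |g x| ≤ 0 := by
      simpa [ENNReal.ofReal_eq_zero] using h0
    exact abs_nonpos_iff.mp this
  · exact absurd hneg (not_lt.mpr hp0.le)
end
end

section
/- Let (X,d,m) be a metric measure space, p ∈ (1,∞), and let D be a D-structure on (X,d,m) that is strongly local in the sense of Shanmugalingam. Then D is pointwise local, i.e. it satisfies properties L1 and L5. -/
open Filter Set
open scoped ENNReal NNReal Topology

noncomputable section

open AxSob AxSob.DStructure

/-- A D-structure that is strongly local in the sense of Shanmugalingam is
pointwise local, i.e. it satisfies properties L1 and L5. -/
theorem shanmugalingam_implies_pointwiseLocal {X : Type*} [MetricSpace X] [CompleteSpace X]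
    [TopologicalSpace.SeparableSpace X] [MeasurableSpace X] [BorelSpace X]
    (m : MeasureTheory.Measure X) (hm : m ≠ 0)
    (hball : ∀ (x : X) (r : ℝ), m (Metric.ball x r) < ∞)
    (p : ℝ) (hp : 1 < p) (S : DStructure X m p)
    (hS : S.ShanmugalingamLocal) : S.PointwiseLocal := by
  have hp0 : (0:ℝ) < p := lt_trans one_pos hp
  have hX : Nonempty X := by
    by_contra h
    rw [not_nonempty_iff] at h
    exact hm (MeasureTheory.Measure.eq_zero_of_isEmpty m)
  obtain ⟨x₀⟩ := hX
  have hfin : ∀ B : Set X, Bornology.IsBounded B → m B < ∞ := by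
    intro B hB
    obtain ⟨r, hr⟩ := hB.subset_ball x₀
    exact lt_of_le_of_lt (MeasureTheory.measure_mono hr) (hball x₀ r)
  have hconstLoc : ∀ c : ℝ, LpLocMem m p (fun _ : X => c) := by
    intro c
    refine ⟨measurable_const, fun B hBmeas hBbd => ?_⟩
    unfold lpIntOn
    rw [MeasureTheory.setLIntegral_const]
    exact ENNReal.mul_lt_top
      (ENNReal.rpow_lt_top_of_nonneg hp0.le ENNReal.ofReal_ne_top) (hfin B hBbd)
  -- zero is a pseudo-gradient of every constant
  have hzero_mem : ∀ c : ℝ, (fun _ : X => (0:ℝ)) ∈ S.D (fun _ : X => c) := by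
    intro c
    have h1 : ({x : X | 0 < (fun _ : X => (1:ℝ)) x}.indicator (fun _ => ((0:ℝ≥0):ℝ)))
        ∈ S.D (fun _ : X => (1:ℝ)) :=
      S.axiomA1 _ 0 (hconstLoc 1) (fun x => one_pos.le) (LipschitzWith.const 1)
    have h0 : (fun _ : X => (0:ℝ)) ∈ S.D (fun _ : X => (1:ℝ)) := by
      refine S.mem_congr_ae _ _ _ h1 (Filter.Eventually.of_forall fun x => ?_)
        measurable_const (le_refl _)
      simp [Set.indicator_apply]
    have h2 := S.axiomA2 (fun _ => 1) (fun _ => 1) (fun _ => 0) (fun _ => 0) (fun _ => 0)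
      c 0 (hconstLoc 1) (hconstLoc 1) h0 h0 measurable_const (le_refl _)
      (Filter.Eventually.of_forall fun x => by simp)
    have heq : S.D (fun x : X => c * (fun _ : X => (1:ℝ)) x + 0 * (fun _ : X => (1:ℝ)) x)
        = S.D (fun _ : X => c) :=
      S.congr_ae _ _ (Filter.Eventually.of_forall fun x => by simp)
    rw [heq] at h2
    exact h2
  have lpIntOn_zero : ∀ B : Set X, lpIntOn m p (fun _ : X => (0:ℝ)) B = 0 := by
    intro B
    simp [lpIntOn, ENNReal.zero_rpow_of_pos hp0]
  have hconstSob : ∀ c : ℝ, (fun _ : X => c) ∈ S.SobolevClass := by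
    intro c
    refine ⟨hconstLoc c, ?_⟩
    have : S.energy (fun _ : X => c) ≤ lpIntOn m p (fun _ : X => (0:ℝ)) Set.univ :=
      iInf₂_le _ (hzero_mem c)
    rw [lpIntOn_zero] at this
    exact lt_of_le_of_lt this ENNReal.zero_lt_top
  constructor
  · -- L1
    rintro u hu B hB ⟨c, hc⟩
    obtain ⟨g, hg⟩ : ∃ g, g ∈ S.D u := by
      by_contra h
      push_neg at h
      have : S.energy u = ⊤ := by
        simp [DStructure.energy, DStructure.energyOn, h]
      have hE := hu.2
      rw [this] at hE
      exact absurd hE (by simp)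
    have hae : ∀ᵐ x ∂(m.restrict B), (fun _ : X => c) x = u x :=
      hc.mono fun x hx => hx.symm
    have hg' := hS (fun _ => c) (hconstSob c) u hu B hB hae (fun _ => 0) (hzero_mem c) g hg
    have hle : S.energyOn u B ≤
        lpIntOn m p (fun x => B.indicator (fun _ => (0:ℝ)) x + Bᶜ.indicator g x) B :=
      iInf₂_le _ hg'
    have hzero : lpIntOn m p (fun x => B.indicator (fun _ => (0:ℝ)) x + Bᶜ.indicator g x) B
        = 0 := by
      unfold lpIntOn
      rw [MeasureTheory.setLIntegral_congr_fun hB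
        (fun x hx => ?_), MeasureTheory.lintegral_zero]
      have h1 : B.indicator (fun _ => (0:ℝ)) x = 0 := by simp [Set.indicator_apply]
      have h2 : Bᶜ.indicator g x = 0 := Set.indicator_of_notMem (by simpa using hx) g
      simp [h1, h2, ENNReal.zero_rpow_of_pos hp0]
    exact le_antisymm (hzero ▸ hle) zero_le
  · -- L5
    intro u hu g hgmin h hh
    have hgmeas := S.measurable_of_mem u g hgmin.1
    have hhmeas := S.measurable_of_mem u h hh
    set B : Set X := {x | h x < g x} with hBdef
    have hBmeas : MeasurableSet B := measurableSet_lt hhmeas hgmeas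
    have hg' := hS u hu u hu B hBmeas (Filter.Eventually.of_forall fun x => rfl)
      h hh g hgmin.1
    set g' : X → ℝ := fun x => B.indicator h x + Bᶜ.indicator g x with hg'def
    have hg'val_mem : ∀ x ∈ B, g' x = h x := by
      intro x hx
      simp [hg'def, Set.indicator_of_mem hx, Set.indicator_of_notMem (show x ∉ Bᶜ by simpa using hx)]
    have hg'val_nmem : ∀ x ∉ B, g' x = g x := by
      intro x hx
      simp [hg'def, Set.indicator_of_notMem hx,
        Set.indicator_of_mem (show x ∈ Bᶜ from hx)]
    have habs : ∀ x, |g' x| ≤ |g x| := by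
      intro x
      have hg0 : 0 ≤ g x := S.nonneg_of_mem u g hgmin.1 x
      by_cases hx : x ∈ B
      · have hh0 : 0 ≤ h x := S.nonneg_of_mem u h hh x
        rw [hg'val_mem x hx, abs_of_nonneg hh0, abs_of_nonneg hg0]
        exact le_of_lt hx
      · rw [hg'val_nmem x hx]
    have hmono : lpIntOn m p g' Set.univ ≤ lpIntOn m p g Set.univ := by
      refine MeasureTheory.lintegral_mono fun x => ?_
      exact ENNReal.rpow_le_rpow (ENNReal.ofReal_le_ofReal (habs x)) hp0.le
    have hge : lpIntOn m p g Set.univ ≤ lpIntOn m p g' Set.univ := by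
      rw [hgmin.2.2]
      exact iInf₂_le _ hg'
    have hrw : ∀ f : X → ℝ, lpIntOn m p f Set.univ
        = ∫⁻ x, ENNReal.ofReal |f x| ^ p ∂m := fun f => by
      simp [lpIntOn]
    have hfin' : (∫⁻ x, ENNReal.ofReal |g' x| ^ p ∂m) ≠ ∞ := by
      rw [← hrw]
      exact ne_of_lt (lt_of_le_of_lt hmono hgmin.2.1.2)
    have haemeas : AEMeasurable (fun x => ENNReal.ofReal |g x| ^ p) m := by
      exact ((hgmeas.abs.ennreal_ofReal).pow_const p).aemeasurable
    have haeeq : (fun x => ENNReal.ofReal |g' x| ^ p) =ᵐ[m]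
        (fun x => ENNReal.ofReal |g x| ^ p) := by
      refine MeasureTheory.ae_eq_of_ae_le_of_lintegral_le
        (Filter.Eventually.of_forall fun x =>
          ENNReal.rpow_le_rpow (ENNReal.ofReal_le_ofReal (habs x)) hp0.le)
        hfin' haemeas (by rw [← hrw, ← hrw]; exact hge)
    filter_upwards [haeeq] with x hx
    by_contra hlt
    push_neg at hlt
    have hxB : x ∈ B := hlt
    have hh0 : 0 ≤ h x := S.nonneg_of_mem u h hh x
    have hstrict : ENNReal.ofReal |g' x| ^ p < ENNReal.ofReal |g x| ^ p := by
      rw [hg'val_mem x hxB, abs_of_nonneg hh0,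
        abs_of_nonneg (S.nonneg_of_mem u g hgmin.1 x)]
      exact ENNReal.rpow_lt_rpow ((ENNReal.ofReal_lt_ofReal_iff (hh0.trans_lt hlt)).2 hlt) hp0
    exact absurd hx (ne_of_lt hstrict)
end
end

section
/- Let (X,d,m) be a metric measure space, p ∈ (1,∞), and let D be a D-structure on (X,d,m) that is strongly local in the sense of Timoshin. Then D is pointwise local, i.e. it satisfies properties L1 and L5. -/
open Filter Set
open scoped ENNReal NNReal Topology

noncomputable section

open AxSob AxSob.DStructure


section TimoshinAux

open MeasureTheory

variable {X : Type*} [MetricSpace X] [MeasurableSpace X]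
variable {m : MeasureTheory.Measure X} {p : ℝ}

private lemma meas_lt_top_of_bounded (hball : ∀ (x : X) (r : ℝ), m (Metric.ball x r) < ∞)
    {B : Set X} (hB : Bornology.IsBounded B) : m B < ∞ := by
  rcases B.eq_empty_or_nonempty with h | ⟨x, hx⟩
  · simp [h]
  · obtain ⟨r, hr⟩ := hB.subset_closedBall x
    calc m B ≤ m (Metric.closedBall x r) := measure_mono hr
      _ ≤ m (Metric.ball x (r + 1)) :=
          measure_mono (Metric.closedBall_subset_ball (by linarith))
      _ < ∞ := hball x (r + 1)

private lemma add_rpow_le (hp : 0 ≤ p) (a b : ℝ≥0∞) :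
    (a + b) ^ p ≤ 2 ^ p * (a ^ p + b ^ p) := by
  calc (a + b) ^ p ≤ (2 * max a b) ^ p := by
        refine ENNReal.rpow_le_rpow ?_ hp
        rw [two_mul]
        exact add_le_add (le_max_left a b) (le_max_right a b)
    _ = 2 ^ p * (max a b) ^ p := ENNReal.mul_rpow_of_nonneg _ _ hp
    _ ≤ 2 ^ p * (a ^ p + b ^ p) := by
        gcongr
        rcases max_cases a b with ⟨h, -⟩ | ⟨h, -⟩ <;> rw [h]
        · exact le_self_add
        · exact le_add_self

private lemma meas_integrand {u : X → ℝ} (hu : Measurable u) :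
    Measurable fun x => ENNReal.ofReal |u x| ^ p :=
  (hu.abs.ennreal_ofReal).pow measurable_const

private lemma lpLocMem_of_bound (hball : ∀ (x : X) (r : ℝ), m (Metric.ball x r) < ∞)
    (hp : 0 < p) {u v : X → ℝ} (hu : AxSob.LpLocMem m p u) (hv : Measurable v)
    (C : ℝ) (hC : ∀ x, |v x| ≤ |u x| + C) : AxSob.LpLocMem m p v := by
  refine ⟨hv, fun B hBm hBb => ?_⟩
  have key : ∀ x, ENNReal.ofReal |v x| ^ p
      ≤ 2 ^ p * (ENNReal.ofReal |u x| ^ p + ENNReal.ofReal C ^ p) := by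
    intro x
    refine le_trans ?_ (add_rpow_le hp.le _ _)
    refine ENNReal.rpow_le_rpow ?_ hp.le
    calc ENNReal.ofReal |v x| ≤ ENNReal.ofReal (|u x| + C) := ENNReal.ofReal_le_ofReal (hC x)
      _ ≤ ENNReal.ofReal |u x| + ENNReal.ofReal C := ENNReal.ofReal_add_le
  have hmain : AxSob.lpIntOn m p v B
      ≤ 2 ^ p * (AxSob.lpIntOn m p u B + ENNReal.ofReal C ^ p * m B) := by
    rw [AxSob.lpIntOn]
    calc ∫⁻ x in B, ENNReal.ofReal |v x| ^ p ∂m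
        ≤ ∫⁻ x in B, 2 ^ p * (ENNReal.ofReal |u x| ^ p + ENNReal.ofReal C ^ p) ∂m :=
          lintegral_mono fun x => key x
      _ = 2 ^ p * (AxSob.lpIntOn m p u B + ENNReal.ofReal C ^ p * m B) := by
          rw [lintegral_const_mul (f := fun x => ENNReal.ofReal |u x| ^ p + ENNReal.ofReal C ^ p) _
              ((meas_integrand hu.1).add measurable_const),
            lintegral_add_right _ measurable_const, setLIntegral_const, AxSob.lpIntOn]
  refine lt_of_le_of_lt hmain ?_
  have h2 : (2 : ℝ≥0∞) ^ p < ∞ := ENNReal.rpow_lt_top_of_nonneg hp.le (by simp)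
  have hC2 : ENNReal.ofReal C ^ p < ∞ :=
    ENNReal.rpow_lt_top_of_nonneg hp.le ENNReal.ofReal_ne_top
  exact ENNReal.mul_lt_top h2 (ENNReal.add_lt_top.mpr
    ⟨hu.2 B hBm hBb, ENNReal.mul_lt_top hC2 (meas_lt_top_of_bounded hball hBb)⟩)

private lemma lpLocMem_zero (hp : 0 < p) : AxSob.LpLocMem m p (fun _ => (0 : ℝ)) := by
  refine ⟨measurable_const, fun B hBm hBb => ?_⟩
  simp [AxSob.lpIntOn, ENNReal.zero_rpow_of_pos hp]

private lemma lpLocMem_const (hball : ∀ (x : X) (r : ℝ), m (Metric.ball x r) < ∞)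
    (hp : 0 < p) (c : ℝ) : AxSob.LpLocMem m p (fun _ => c) :=
  lpLocMem_of_bound hball hp (lpLocMem_zero hp) measurable_const |c| (fun x => by simp)

private lemma lpIntOn_zero (hp : 0 < p) (B : Set X) :
    AxSob.lpIntOn m p (fun _ => (0 : ℝ)) B = 0 := by
  simp [AxSob.lpIntOn, ENNReal.zero_rpow_of_pos hp]

private lemma memD_of_funeq (S : AxSob.DStructure X m p) {u v g : X → ℝ}
    (h : g ∈ S.D u) (e : u = v) : g ∈ S.D v := e ▸ h

private lemma zero_mem_D_const (S : AxSob.DStructure X m p)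
    (hball : ∀ (x : X) (r : ℝ), m (Metric.ball x r) < ∞) (hp : 0 < p) (c : ℝ) :
    (fun _ => (0 : ℝ)) ∈ S.D (fun _ => c) := by
  have base : ∀ a : ℝ, 0 ≤ a → (fun _ => (0 : ℝ)) ∈ S.D (fun _ => a) := by
    intro a ha
    have h := S.axiomA1 (fun _ => a) 0 (lpLocMem_const hball hp a) (fun _ => ha)
      (LipschitzWith.const a)
    have e : ({x : X | 0 < (fun _ => a) x}.indicator (fun _ => (((0 : ℝ≥0)) : ℝ)))
        = (fun _ : X => (0 : ℝ)) := by
      funext x; simp [Set.indicator]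
    rwa [e] at h
  rcases le_or_gt 0 c with hc | hc
  · exact base c hc
  · have h := S.axiomA2 (fun _ => -c) (fun _ => (0 : ℝ)) (fun _ => (0 : ℝ)) (fun _ => (0 : ℝ))
      (fun _ => (0 : ℝ)) (-1) 0 (lpLocMem_const hball hp (-c)) (lpLocMem_zero hp)
      (base (-c) (by linarith)) (base 0 le_rfl) measurable_const (fun _ => le_rfl)
      (Filter.Eventually.of_forall fun x => by norm_num)
    refine memD_of_funeq S h ?_
    funext x
    show -1 * (-c) + 0 * (0 : ℝ) = c
    ring

private lemma mem_D_neg (S : AxSob.DStructure X m p)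
    (hball : ∀ (x : X) (r : ℝ), m (Metric.ball x r) < ∞) (hp : 0 < p) {u g : X → ℝ}
    (hu : AxSob.LpLocMem m p u) (hg : g ∈ S.D u) : g ∈ S.D (fun x => -u x) := by
  have h := S.axiomA2 u (fun _ => (0 : ℝ)) g (fun _ => (0 : ℝ)) g (-1) 0 hu (lpLocMem_zero hp)
    hg (zero_mem_D_const S hball hp 0) (S.measurable_of_mem _ _ hg) (S.nonneg_of_mem _ _ hg)
    (Filter.Eventually.of_forall fun x => by norm_num)
  refine memD_of_funeq S h ?_
  funext x
  show -1 * u x + 0 * (0 : ℝ) = -u x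
  ring

private lemma mem_D_add_const (S : AxSob.DStructure X m p)
    (hball : ∀ (x : X) (r : ℝ), m (Metric.ball x r) < ∞) (hp : 0 < p) {u g : X → ℝ}
    (hu : AxSob.LpLocMem m p u) (hg : g ∈ S.D u) (c : ℝ) : g ∈ S.D (fun x => u x + c) := by
  have h := S.axiomA2 u (fun _ => (1 : ℝ)) g (fun _ => (0 : ℝ)) g 1 c hu
    (lpLocMem_const hball hp 1) hg (zero_mem_D_const S hball hp 1)
    (S.measurable_of_mem _ _ hg) (S.nonneg_of_mem _ _ hg)
    (Filter.Eventually.of_forall fun x => by simp)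
  refine memD_of_funeq S h ?_
  funext x
  show 1 * u x + c * (1 : ℝ) = u x + c
  ring

private lemma exists_pg (S : AxSob.DStructure X m p) {u : X → ℝ} (hu : S.energy u < ∞) :
    ∃ g ∈ S.D u, AxSob.lpIntOn m p g Set.univ < ∞ := by
  rw [AxSob.DStructure.energy, AxSob.DStructure.energyOn, iInf_lt_iff] at hu
  obtain ⟨g, hg⟩ := hu
  rw [iInf_lt_iff] at hg
  obtain ⟨hgD, hfin⟩ := hg
  exact ⟨g, hgD, hfin⟩

private lemma energyOn_le' (S : AxSob.DStructure X m p) {u g : X → ℝ}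
    (hg : g ∈ S.D u) (B : Set X) : S.energyOn u B ≤ AxSob.lpIntOn m p g B :=
  iInf₂_le g hg

end TimoshinAux

/-- A D-structure that is strongly local in the sense of Timoshin is pointwise local,
i.e. it satisfies properties L1 and L5. -/
theorem timoshin_implies_pointwiseLocal {X : Type*} [MetricSpace X] [CompleteSpace X]
    [TopologicalSpace.SeparableSpace X] [MeasurableSpace X] [BorelSpace X]
    (m : MeasureTheory.Measure X) (hm : m ≠ 0)
    (hball : ∀ (x : X) (r : ℝ), m (Metric.ball x r) < ∞)
    (p : ℝ) (hp : 1 < p) (S : DStructure X m p)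
    (hT : S.TimoshinLocal) : S.PointwiseLocal := by
  classical
  have hp0 : 0 < p := lt_trans one_pos hp
  constructor
  -- L1
  · rintro u hu B hBmeas ⟨c, hc⟩
    obtain ⟨huloc, huE⟩ := hu
    obtain ⟨g, hgD, -⟩ := exists_pg S huE
    have hgm : Measurable g := S.measurable_of_mem _ _ hgD
    have hgnn : ∀ x, 0 ≤ g x := fun x => S.nonneg_of_mem _ _ hgD x
    have hSu : u ∈ S.SobolevClass := ⟨huloc, huE⟩
    have hconstSob : ∀ a : ℝ, (fun _ : X => a) ∈ S.SobolevClass := by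
      intro a
      refine ⟨lpLocMem_const hball hp0 a, ?_⟩
      refine lt_of_le_of_lt (energyOn_le' S (zero_mem_D_const S hball hp0 a) Set.univ) ?_
      rw [lpIntOn_zero hp0]
      exact ENNReal.zero_lt_top 
    have hnegloc : LpLocMem m p (fun x => -u x) :=
      lpLocMem_of_bound hball hp0 huloc huloc.1.neg 0 (fun x => by simp [abs_neg])
    have hnegSob : (fun x => -u x) ∈ S.SobolevClass := by
      refine ⟨hnegloc, ?_⟩
      obtain ⟨g₀, hg₀D, hg₀fin⟩ := exists_pg S huE
      exact lt_of_le_of_lt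
        (energyOn_le' S (mem_D_neg S hball hp0 huloc hg₀D) Set.univ) hg₀fin
    set F₁ : X → ℝ := fun x => {y | u y < c}.indicator g x
      + {y | c < u y}.indicator (fun _ => (0:ℝ)) x
      + {y | u y = c}.indicator (fun y => min (g y) ((fun _ : X => (0:ℝ)) y)) x with hF₁def
    set F₂ : X → ℝ := fun x => {y | -u y < -c}.indicator g x
      + {y | -c < -u y}.indicator (fun _ => (0:ℝ)) x
      + {y | -u y = -c}.indicator (fun y => min (g y) ((fun _ : X => (0:ℝ)) y)) x with hF₂def
    have hF₁mem : F₁ ∈ S.D (fun x => min (u x) c) :=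
      hT u hSu (fun _ => c) (hconstSob c) g hgD (fun _ => 0) (zero_mem_D_const S hball hp0 c)
    have hF₂mem : F₂ ∈ S.D (fun x => min (-u x) (-c)) :=
      hT (fun x => -u x) hnegSob (fun _ => -c) (hconstSob (-c)) g
        (mem_D_neg S hball hp0 huloc hgD) (fun _ => 0) (zero_mem_D_const S hball hp0 (-c))
    set G : X → ℝ := fun x => {y | u y ≠ c}.indicator g x with hGdef
    have hsetmeas : MeasurableSet {y : X | u y ≠ c} :=
      huloc.1 ((measurableSet_singleton c).compl)
    have hGmeas : Measurable G := hgm.indicator hsetmeas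
    have hGnn : (0 : X → ℝ) ≤ G := fun x => Set.indicator_nonneg (fun y _ => hgnn y) x
    have habs : ∀ a b : ℝ, |min a b| ≤ |a| + |b| := by
      intro a b
      rcases min_cases a b with ⟨h, -⟩ | ⟨h, -⟩ <;> rw [h]
      · exact le_add_of_nonneg_right (abs_nonneg b)
      · exact le_add_of_nonneg_left (abs_nonneg a)
    have hloc₁ : LpLocMem m p (fun x => min (u x) c) :=
      lpLocMem_of_bound hball hp0 huloc (huloc.1.min measurable_const) |c| (fun x => habs _ _)
    have hloc₂ : LpLocMem m p (fun x => min (-u x) (-c)) :=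
      lpLocMem_of_bound hball hp0 huloc (huloc.1.neg.min measurable_const) |c|
        (fun x => by simpa [abs_neg] using habs (-u x) (-c))
    have hsum : ∀ x, F₁ x + F₂ x = G x := by
      intro x
      have hmin0 : min (g x) (0:ℝ) = 0 := min_eq_right (hgnn x)
      rcases lt_trichotomy (u x) c with hx | hx | hx
      · simp [hF₁def, hF₂def, hGdef, Set.indicator_apply, hx, hx.ne, hx.ne',
          not_lt.mpr hx.le, hmin0]
      · simp [hF₁def, hF₂def, hGdef, Set.indicator_apply, hx, hmin0]
      · simp [hF₁def, hF₂def, hGdef, Set.indicator_apply, hx, hx.ne, hx.ne',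
          not_lt.mpr hx.le, hmin0]
    have hA2 := S.axiomA2 (fun x => min (u x) c) (fun x => min (-u x) (-c)) F₁ F₂ G 1 (-1)
      hloc₁ hloc₂ hF₁mem hF₂mem hGmeas hGnn
      (Filter.Eventually.of_forall fun x => by
        simp only [abs_one, abs_neg, one_mul]
        exact (hsum x).le)
    have hGmem : G ∈ S.D (fun x => u x + c) := by
      refine memD_of_funeq S hA2 ?_
      funext x
      show 1 * min (u x) c + (-1) * min (-u x) (-c) = u x + c
      rcases le_total (u x) c with hxc | hxc
      · rw [min_eq_left hxc, min_eq_right (neg_le_neg hxc)]; ring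
      · rw [min_eq_right hxc, min_eq_left (neg_le_neg hxc)]; ring
    have hulocc : LpLocMem m p (fun x => u x + c) :=
      lpLocMem_of_bound hball hp0 huloc (huloc.1.add_const c) |c| (fun x => abs_add_le _ _)
    have hGu : G ∈ S.D u := by
      refine memD_of_funeq S (mem_D_add_const S hball hp0 hulocc hGmem (-c)) ?_
      funext x; ring
    have hzero : lpIntOn m p G B = 0 := by
      rw [lpIntOn]
      have hae : ∀ᵐ x ∂(m.restrict B),
          ENNReal.ofReal |G x| ^ p = (fun _ : X => (0:ℝ≥0∞)) x := by
        filter_upwards [hc] with x hx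
        have hGx : G x = 0 := by simp [hGdef, Set.indicator_apply, hx]
        simp [hGx, ENNReal.zero_rpow_of_pos hp0]
      calc ∫⁻ x in B, ENNReal.ofReal |G x| ^ p ∂m
          = ∫⁻ _ in B, (0:ℝ≥0∞) ∂m := MeasureTheory.lintegral_congr_ae hae
        _ = 0 := MeasureTheory.lintegral_zero
    exact le_antisymm (by rw [← hzero]; exact energyOn_le' S hGu B) zero_le
  -- L5
  · rintro u hu g ⟨hgD, hgLp, hgE⟩ h hhD
    have hgm : Measurable g := S.measurable_of_mem _ _ hgD
    have hhm : Measurable h := S.measurable_of_mem _ _ hhD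
    have hgnn : ∀ x, 0 ≤ g x := fun x => S.nonneg_of_mem _ _ hgD x
    have hhnn : ∀ x, 0 ≤ h x := fun x => S.nonneg_of_mem _ _ hhD x
    have hminD : (fun x => min (g x) (h x)) ∈ S.D u := by
      have hmin := hT u hu u hu g hgD h hhD
      have e1 : (fun x => min (u x) (u x)) = u := funext fun x => min_self _
      rw [e1] at hmin
      have e2 : (fun x => {y | u y < u y}.indicator g x + {y | u y < u y}.indicator h x
          + {y | u y = u y}.indicator (fun y => min (g y) (h y)) x)
          = fun x => min (g x) (h x) := by
        have hs1 : {y : X | u y < u y} = ∅ := by ext y; simp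
        have hs2 : {y : X | u y = u y} = Set.univ := by ext y; simp
        funext x
        simp [hs1, hs2]
      rwa [e2] at hmin
    set f₁ : X → ℝ≥0∞ := fun x => ENNReal.ofReal |min (g x) (h x)| ^ p with hf₁
    set f₂ : X → ℝ≥0∞ := fun x => ENNReal.ofReal |g x| ^ p with hf₂
    have hle : ∀ x, f₁ x ≤ f₂ x := by
      intro x
      refine ENNReal.rpow_le_rpow (ENNReal.ofReal_le_ofReal ?_) hp0.le
      rw [abs_of_nonneg (le_min (hgnn x) (hhnn x)), abs_of_nonneg (hgnn x)]
      exact min_le_left _ _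
    have hf₁meas : Measurable f₁ := meas_integrand (hgm.min hhm)
    have hf₂meas : Measurable f₂ := meas_integrand hgm
    have hI2 : ∫⁻ x, f₂ x ∂m = S.energy u := by
      have h' := hgE
      rwa [lpIntOn, MeasureTheory.setLIntegral_univ] at h'
    have hI2fin : ∫⁻ x, f₂ x ∂m < ∞ := by
      have h' := hgLp.2
      rwa [lpIntOn, MeasureTheory.setLIntegral_univ] at h'
    have hI1le : ∫⁻ x, f₁ x ∂m ≤ ∫⁻ x, f₂ x ∂m := MeasureTheory.lintegral_mono hle
    have hI1ge : ∫⁻ x, f₂ x ∂m ≤ ∫⁻ x, f₁ x ∂m := by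
      rw [hI2]
      have h' := energyOn_le' S hminD Set.univ
      rwa [lpIntOn, MeasureTheory.setLIntegral_univ] at h'
    have hIeq : ∫⁻ x, f₁ x ∂m = ∫⁻ x, f₂ x ∂m := le_antisymm hI1le hI1ge
    have hsub0 : ∫⁻ x, (f₂ x - f₁ x) ∂m = 0 := by
      rw [MeasureTheory.lintegral_sub hf₁meas (by rw [hIeq]; exact hI2fin.ne)
        (Filter.Eventually.of_forall hle), hIeq, tsub_self]
    have hae : ∀ᵐ x ∂m, f₂ x - f₁ x = 0 :=
      (MeasureTheory.lintegral_eq_zero_iff (hf₂meas.sub hf₁meas)).mp hsub0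
    filter_upwards [hae] with x hx
    by_contra hcon
    push_neg at hcon
    have hminx : min (g x) (h x) = h x := min_eq_right hcon.le
    have hf1x : f₁ x < f₂ x := by
      simp only [hf₁, hf₂]
      refine ENNReal.rpow_lt_rpow ?_ hp0
      rw [hminx, abs_of_nonneg (hhnn x), abs_of_nonneg (hgnn x)]
      exact (ENNReal.ofReal_lt_ofReal_iff (lt_of_le_of_lt (hhnn x) hcon)).mpr hcon
    exact absurd (tsub_eq_zero_iff_le.mp hx) (not_le.mpr hf1x)
end
end

section
/- Let G = (V,E) be a locally finite connected graph with at least two vertices, equipped with the path metric d and the counting measure m on V, and with the D-structure D[u] := {g : V → [0,∞] : |u(x) − u(y)| ≤ g(x) + g(y) for all adjacent x ∼ y}. Then property L2 fails: there exist a function u : V → ℝ belonging to the Sobolev class S^p(V), a point x ∈ V, and a set B = {x} on which u is constant, such that the minimal pseudo-gradient Du satisfies Du(x) > 0. -/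
open scoped ENNReal

noncomputable section

namespace GraphSob

variable {V : Type*}

/-- The family of pseudo-gradients of `u : V → ℝ` on a graph `G`:
`D[u] = { g : V → [0,∞] : |u(x) - u(y)| ≤ g(x) + g(y) whenever x ∼ y }`. -/
def graphD (G : SimpleGraph V) (u : V → ℝ) : Set (V → ℝ≥0∞) :=
  {g | ∀ x y : V, G.Adj x y → ENNReal.ofReal |u x - u y| ≤ g x + g y}

/-- The `p`-Dirichlet energy of `u` with respect to the counting measure:
`E_p(u) = inf { ∑_{x ∈ V} g(x)^p : g ∈ D[u] }`. -/
def graphEnergy (G : SimpleGraph V) (p : ℝ) (u : V → ℝ) : ℝ≥0∞ :=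
  ⨅ (g : V → ℝ≥0∞) (_ : g ∈ graphD G u), ∑' x : V, g x ^ p

end GraphSob

open GraphSob

/-- On a locally finite connected graph with at least two vertices, property L2 fails
for the `D`-structure `D[u] = { g : |u(x) - u(y)| ≤ g(x) + g(y) for x ∼ y }`:
there are a function `u` in the Sobolev class `S^p(V)` (i.e. with finite energy) and a
vertex `x` — so that `u` is trivially constant on `B = {x}` — such that the minimal
pseudo-gradient `Du` (any `g ∈ D[u]` of minimal `ℓ^p`-energy) satisfies `Du(x) > 0`. -/
theorem graph_D_structure_fails_L2 {V : Type*} (G : SimpleGraph V)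
    (hconn : G.Connected) (hlf : ∀ v : V, (G.neighborSet v).Finite)
    (htwo : Nontrivial V) (p : ℝ) (hp : 1 < p) :
    ∃ (u : V → ℝ) (x : V), graphEnergy G p u < ∞ ∧
      ∀ g ∈ graphD G u, (∑' y : V, g y ^ p) = graphEnergy G p u → 0 < g x := by
  classical
  -- pick a vertex `a` and a neighbor of it
  obtain ⟨a, b, hab⟩ := htwo
  obtain ⟨w⟩ := hconn.preconnected a b
  have hnil : ¬ w.Nil := SimpleGraph.Walk.not_nil_of_ne hab
  rw [SimpleGraph.Walk.not_nil_iff] at hnil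
  obtain ⟨c, hac, -⟩ := hnil
  have hp0 : (0:ℝ) < p := lt_trans one_pos hp
  -- the test function: indicator of `{a}`
  set u : V → ℝ := fun v => if v = a then 1 else 0 with hu
  -- the finite neighbor set of `a`
  set N : Finset V := (hlf a).toFinset with hN
  have hcN : c ∈ N := by simp [hN, hac]
  have haN : a ∉ N := by simp [hN]
  have hNpos : 0 < (N.card : ℝ≥0∞) := by
    have : 0 < N.card := Finset.card_pos.2 ⟨c, hcN⟩
    exact_mod_cast this
  -- the competitor: `1/2` on `{a} ∪ N(a)`, `0` elsewhere
  set g₀ : V → ℝ≥0∞ := fun v => if v ∈ insert a N then 2⁻¹ else 0 with hg₀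
  have hg₀val : ∀ v ∈ insert a N, g₀ v = 2⁻¹ := by
    intro v hv
    show (if v ∈ insert a N then (2⁻¹:ℝ≥0∞) else 0) = 2⁻¹
    rw [if_pos hv]
  have hg₀D : g₀ ∈ graphD G u := by
    intro x y hxy
    rcases eq_or_ne x a with hx | hx
    · have hy : y ≠ a := fun h => G.irrefl (hx ▸ h ▸ hxy)
      have hyN : y ∈ N := by simp [hN, ← hx, hxy]
      have hsum : g₀ x + g₀ y = 1 := by
        rw [hg₀val x (hx ▸ Finset.mem_insert_self a N),
          hg₀val y (Finset.mem_insert_of_mem hyN), ENNReal.inv_two_add_inv_two]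
      rw [hsum]
      have : |u x - u y| = 1 := by simp [hu, hx, hy]
      simp [this]
    · rcases eq_or_ne y a with hy | hy
      · have hxN : x ∈ N := by simp [hN, ← hy, hxy.symm]
        have hsum : g₀ x + g₀ y = 1 := by
          rw [hg₀val x (Finset.mem_insert_of_mem hxN),
            hg₀val y (hy ▸ Finset.mem_insert_self a N), ENNReal.inv_two_add_inv_two]
        rw [hsum]
        have : |u x - u y| = 1 := by simp [hu, hx, hy]
        simp [this]
      · have : |u x - u y| = 0 := by simp [hu, hx, hy]
        simp [this]
  -- energy of the competitor
  have hzero : ∀ v ∉ insert a N, g₀ v ^ p = 0 := by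
    intro v hv
    show (if v ∈ insert a N then (2⁻¹:ℝ≥0∞) else 0) ^ p = 0
    rw [if_neg hv]
    exact ENNReal.zero_rpow_of_pos hp0
  have hg₀sum : (∑' v : V, g₀ v ^ p) = (N.card + 1) * 2⁻¹ ^ p := by
    rw [tsum_eq_sum hzero]
    have : ∀ v ∈ insert a N, g₀ v ^ p = 2⁻¹ ^ p := by
      intro v hv; rw [hg₀val v hv]
    rw [Finset.sum_congr rfl this, Finset.sum_const, Finset.card_insert_of_notMem haN,
      nsmul_eq_mul]
    push_cast
    ring
  have hEle : graphEnergy G p u ≤ (N.card + 1) * 2⁻¹ ^ p := by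
    rw [← hg₀sum]
    exact iInf₂_le g₀ hg₀D
  -- the competitor's energy is strictly below `N.card`
  have hkey : ((N.card : ℝ≥0∞) + 1) * 2⁻¹ ^ p < N.card := by
    have h1 : (2⁻¹ : ℝ≥0∞) ^ p < 2⁻¹ := by
      calc (2⁻¹ : ℝ≥0∞) ^ p < 2⁻¹ ^ (1:ℝ) := by
            apply ENNReal.rpow_lt_rpow_of_exponent_gt (by norm_num) (by norm_num) hp
        _ = 2⁻¹ := by rw [ENNReal.rpow_one]
    calc ((N.card : ℝ≥0∞) + 1) * 2⁻¹ ^ p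
        < ((N.card : ℝ≥0∞) + 1) * 2⁻¹ := by
          apply ENNReal.mul_lt_mul_right (by simp) (by finiteness) h1
      _ ≤ ((N.card : ℝ≥0∞) + N.card) * 2⁻¹ := by
          gcongr
          exact_mod_cast Finset.card_pos.2 ⟨c, hcN⟩
      _ = N.card := by
          rw [← two_mul, mul_comm, ← mul_assoc, ENNReal.inv_mul_cancel (by norm_num) (by norm_num),
            one_mul]
  refine ⟨u, a, lt_of_le_of_lt hEle (lt_of_lt_of_le hkey le_top), ?_⟩
  intro g hg hsum
  by_contra h0
  push_neg at h0
  have hga : g a = 0 := le_antisymm h0 zero_le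
  -- every neighbor of `a` must carry mass at least 1
  have hg1 : ∀ v ∈ N, (1:ℝ≥0∞) ≤ g v := by
    intro v hv
    have hav : G.Adj a v := by simpa [hN] using hv
    have := hg a v hav
    have huv : |u a - u v| = 1 := by
      have : v ≠ a := fun h => haN (h ▸ hv)
      simp [hu, this]
    rw [huv, hga, zero_add] at this
    simpa using this
  have hlow : (N.card : ℝ≥0∞) ≤ ∑' v : V, g v ^ p := by
    calc (N.card : ℝ≥0∞) = ∑ v ∈ N, (1:ℝ≥0∞) := by simp
      _ ≤ ∑ v ∈ N, g v ^ p := by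
          apply Finset.sum_le_sum
          intro v hv
          calc (1:ℝ≥0∞) = 1 ^ p := (ENNReal.one_rpow p).symm
            _ ≤ g v ^ p := ENNReal.rpow_le_rpow (hg1 v hv) (le_of_lt hp0)
      _ ≤ ∑' v : V, g v ^ p := ENNReal.sum_le_tsum N
  rw [hsum] at hlow
  exact absurd (lt_of_le_of_lt (le_trans hlow hEle) hkey) (lt_irrefl _)
end
end
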